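/- arXiv:1411.1793 — 6 statements merged into one kernel-verified Lean document; each statement's English description precedes it below -/
import Mathlib

section
/- Every oriented simple lattice cycle is either counterclockwise oriented or clockwise oriented; that is, for every oriented simple lattice cycle γ, either wind(γ,p) ∈ {0,1} for every point p not in the image of γ, or wind(γ,p) ∈ {−1,0} for every such p. -/
open scoped Classical

/-- An oriented simple lattice cycle in the grid graph on `ℤ²`: a cyclic sequence
`v 0, v 1, …, v (n-1), v n = v 0` (encoded as an `n`-periodic function `ℕ → ℤ × ℤ`),
with `n ≥ 4`, vertices pairwise distinct within one period, and consecutive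
vertices at Euclidean distance `1`. -/
structure LatticeCycle where
  n : ℕ
  four_le : 4 ≤ n
  v : ℕ → ℤ × ℤ
  periodic : ∀ i, v (i + n) = v i
  inj : ∀ i j, i < n → j < n → v i = v j → i = j
  step : ∀ i, v (i + 1) - v i = (1, 0) ∨ v (i + 1) - v i = (-1, 0) ∨
    v (i + 1) - v i = (0, 1) ∨ v (i + 1) - v i = (0, -1)

/-- Inclusion of `ℤ²` into `ℝ²`. -/
def toR (v : ℤ × ℤ) : ℝ × ℝ := ((v.1 : ℝ), (v.2 : ℝ))

/-- The image of a lattice cycle: the union of the closed segments `[vᵢ, vᵢ₊₁] ⊆ ℝ²`. -/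
def LatticeCycle.image (γ : LatticeCycle) : Set (ℝ × ℝ) :=
  ⋃ i ∈ Finset.range γ.n, segment ℝ (toR (γ.v i)) (toR (γ.v (i + 1)))

/-- Signed crossing of the directed edge `u → w` with the rightward horizontal ray
from `p`: an edge from `(a,b)` to `(a,b+1)` contributes `+1`, and an edge from
`(a,b+1)` to `(a,b)` contributes `-1`, whenever `a > p₁` and `b ≤ p₂ < b + 1`. -/
noncomputable def vcross (u w : ℤ × ℤ) (p : ℝ × ℝ) : ℤ :=
  if w = (u.1, u.2 + 1) ∧ p.1 < (u.1 : ℝ) ∧ (u.2 : ℝ) ≤ p.2 ∧ p.2 < (u.2 : ℝ) + 1 then 1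
  else if u = (w.1, w.2 + 1) ∧ p.1 < (w.1 : ℝ) ∧ (w.2 : ℝ) ≤ p.2 ∧ p.2 < (w.2 : ℝ) + 1 then -1
  else 0

/-- The winding number of `γ` around `p`: the signed number of directed vertical
edges of `γ` crossing the rightward horizontal ray from `p`. -/
noncomputable def wind (γ : LatticeCycle) (p : ℝ × ℝ) : ℤ :=
  ∑ i ∈ Finset.range γ.n, vcross (γ.v i) (γ.v (i + 1)) p

/-- `γ` is counterclockwise oriented: `wind(γ,p) ∈ {0,1}` for every `p` off the image. -/
def LatticeCycle.ccw (γ : LatticeCycle) : Prop :=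
  ∀ p : ℝ × ℝ, p ∉ γ.image → wind γ p = 0 ∨ wind γ p = 1

/-- `γ` is clockwise oriented: `wind(γ,p) ∈ {-1,0}` for every `p` off the image. -/
def LatticeCycle.cw (γ : LatticeCycle) : Prop :=
  ∀ p : ℝ × ℝ, p ∉ γ.image → wind γ p = -1 ∨ wind γ p = 0

/-- The point `v + (k/2, l/2)`; for `k, l ∈ {-1, 1}` these are the four points of `N_v`. -/
noncomputable def corner (v : ℤ × ℤ) (k l : ℤ) : ℝ × ℝ :=
  ((v.1 : ℝ) + (k : ℝ) / 2, (v.2 : ℝ) + (l : ℝ) / 2)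

/-- The metric weight of `v` with respect to `γ`:
`(1/4) · Σ_{u ∈ N_v} wind(γ,u)`. -/
noncomputable def metricw (γ : LatticeCycle) (v : ℤ × ℤ) : ℚ :=
  ((wind γ (corner v (-1) (-1)) + wind γ (corner v (-1) 1) +
    wind γ (corner v 1 (-1)) + wind γ (corner v 1 1) : ℤ) : ℚ) / 4

/-- The set of values `{wind(γ,u) : u ∈ N_v}` (each distinct value counted once). -/
noncomputable def windSet (γ : LatticeCycle) (v : ℤ × ℤ) : Finset ℤ :=
  {wind γ (corner v (-1) (-1)), wind γ (corner v (-1) 1),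
   wind γ (corner v 1 (-1)), wind γ (corner v 1 1)}

/-- The topological weight of `v` with respect to `γ`: the arithmetic mean of the
set of values `{wind(γ,u) : u ∈ N_v}`, each distinct value counted once. -/
noncomputable def topw (γ : LatticeCycle) (v : ℤ × ℤ) : ℚ :=
  (∑ k ∈ windSet γ v, (k : ℚ)) / ((windSet γ v).card : ℚ)

/-- The angle of `γ` at the vertex of index `i`: with `d_in = vᵢ - vᵢ₋₁` and
`d_out = vᵢ₊₁ - vᵢ`, it is `0` if `d_out = d_in`, `1/4` if `d_out` is `d_in`
rotated by 90° counterclockwise, `-1/4` if rotated by 90° clockwise. -/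
noncomputable def angleAt (γ : LatticeCycle) (i : ℕ) : ℚ :=
  let din := γ.v (i + γ.n) - γ.v (i + γ.n - 1)
  let dout := γ.v (i + 1) - γ.v i
  if dout = din then 0
  else if dout = (-din.2, din.1) then 1/4
  else if dout = (din.2, -din.1) then -1/4
  else 0

/-- `v` is a vertex of `γ`. -/
def LatticeCycle.isVertex (γ : LatticeCycle) (v : ℤ × ℤ) : Prop :=
  ∃ i, i < γ.n ∧ γ.v i = v

/-- The angle of `γ` at a point `v ∈ ℤ²`: the angle at the (unique) index of `v`
if `v` is a vertex of `γ`, and `0` otherwise. -/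
noncomputable def angle (γ : LatticeCycle) (v : ℤ × ℤ) : ℚ :=
  if h : γ.isVertex v then angleAt γ h.choose else 0

/-- The color of a lattice point: `1` if `x + y` is odd, `-1` if `x + y` is even. -/
def col (v : ℤ × ℤ) : ℤ := if Even (v.1 + v.2) then -1 else 1

/-- The enclosed charge `charge_int(γ) = Σ_{v ∈ ℤ², v ∉ image γ} col(v)·wind(γ,v)`. -/
noncomputable def chargeInt (γ : LatticeCycle) : ℤ :=
  ∑ᶠ v : ℤ × ℤ, if toR v ∉ γ.image then col v * wind γ (toR v) else 0

/-- The boundary charge `charge_∂(γ) = Σ_{v vertex of γ} angle(γ,v)·col(v)`. -/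
noncomputable def chargeBd (γ : LatticeCycle) : ℚ :=
  ∑ i ∈ Finset.range γ.n, angle γ (γ.v i) * (col (γ.v i) : ℚ)

namespace JordanGrid

/-- integer crossing indicator: cell version of `vcross`. -/
noncomputable def icross (u w c : ℤ × ℤ) : ℤ :=
  if w = (u.1, u.2 + 1) ∧ c.1 < u.1 ∧ u.2 = c.2 then 1
  else if u = (w.1, w.2 + 1) ∧ c.1 < w.1 ∧ w.2 = c.2 then -1 else 0

/-- horizontal crossing indicator (for the Kirchhoff identity). -/
noncomputable def hcr (u w c : ℤ × ℤ) : ℤ :=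
  if w = (u.1 + 1, u.2) ∧ u.1 = c.1 ∧ c.2 < u.2 then 1
  else if u = (w.1 + 1, w.2) ∧ w.1 = c.1 ∧ c.2 < w.2 then -1 else 0

/-- upper-right quadrant indicator. -/
noncomputable def gq (c u : ℤ × ℤ) : ℤ := if c.1 < u.1 ∧ c.2 < u.2 then 1 else 0

noncomputable def Wc (γ : LatticeCycle) (c : ℤ × ℤ) : ℤ :=
  ∑ i ∈ Finset.range γ.n, icross (γ.v i) (γ.v (i + 1)) c

noncomputable def Hc (γ : LatticeCycle) (c : ℤ × ℤ) : ℤ :=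
  ∑ i ∈ Finset.range γ.n, hcr (γ.v i) (γ.v (i + 1)) c

variable (γ : LatticeCycle)

lemma npos : 0 < γ.n := lt_of_lt_of_le (by norm_num) γ.four_le

lemma vcross_eq (u w : ℤ × ℤ) (p : ℝ × ℝ) :
    vcross u w p = icross u w (⌊p.1⌋, ⌊p.2⌋) := by
  have h1 : ∀ z : ℤ, p.1 < (z : ℝ) ↔ ⌊p.1⌋ < z := fun z => (Int.floor_lt).symm
  have h2 : ∀ z : ℤ, ((z : ℝ) ≤ p.2 ∧ p.2 < (z : ℝ) + 1) ↔ z = ⌊p.2⌋ := by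
    intro z
    constructor
    · intro ⟨ha, hb⟩
      have : ⌊p.2⌋ = z := Int.floor_eq_iff.mpr ⟨ha, by push_cast; linarith⟩
      omega
    · rintro rfl
      exact ⟨Int.floor_le _, by push_cast; exact Int.lt_floor_add_one _⟩
  have C1 : (w = (u.1, u.2 + 1) ∧ p.1 < (u.1 : ℝ) ∧ (u.2 : ℝ) ≤ p.2 ∧ p.2 < (u.2 : ℝ) + 1)
      ↔ (w = (u.1, u.2 + 1) ∧ ⌊p.1⌋ < u.1 ∧ u.2 = ⌊p.2⌋) := by
    constructor
    · rintro ⟨hh, hx, hy1, hy2⟩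
      exact ⟨hh, (h1 u.1).mp hx, (h2 u.2).mp ⟨hy1, hy2⟩⟩
    · rintro ⟨hh, hx, hy⟩
      obtain ⟨hy1, hy2⟩ := (h2 u.2).mpr hy
      exact ⟨hh, (h1 u.1).mpr hx, hy1, hy2⟩
  have C2 : (u = (w.1, w.2 + 1) ∧ p.1 < (w.1 : ℝ) ∧ (w.2 : ℝ) ≤ p.2 ∧ p.2 < (w.2 : ℝ) + 1)
      ↔ (u = (w.1, w.2 + 1) ∧ ⌊p.1⌋ < w.1 ∧ w.2 = ⌊p.2⌋) := by
    constructor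
    · rintro ⟨hh, hx, hy1, hy2⟩
      exact ⟨hh, (h1 w.1).mp hx, (h2 w.2).mp ⟨hy1, hy2⟩⟩
    · rintro ⟨hh, hx, hy⟩
      obtain ⟨hy1, hy2⟩ := (h2 w.2).mpr hy
      exact ⟨hh, (h1 w.1).mpr hx, hy1, hy2⟩
  exact if_congr C1 rfl (if_congr C2 rfl rfl)

lemma wind_eq (p : ℝ × ℝ) : wind γ p = Wc γ (⌊p.1⌋, ⌊p.2⌋) :=
  Finset.sum_congr rfl fun i _ => vcross_eq _ _ _

lemma v_add_mul (i k : ℕ) : γ.v (i + γ.n * k) = γ.v i := by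
  induction k with
  | zero => simp
  | succ k ih =>
      have : i + γ.n * (k + 1) = (i + γ.n * k) + γ.n := by ring
      rw [this, γ.periodic]; exact ih

lemma v_mod (i : ℕ) : γ.v (i % γ.n) = γ.v i := by
  conv_rhs => rw [← Nat.mod_add_div i γ.n]
  exact (v_add_mul γ (i % γ.n) (i / γ.n)).symm

lemma veq_iff (i j : ℕ) : γ.v i = γ.v j ↔ i % γ.n = j % γ.n := by
  constructor
  · intro h
    exact γ.inj _ _ (Nat.mod_lt _ (npos γ)) (Nat.mod_lt _ (npos γ))
      (by rw [v_mod, v_mod, h])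
  · intro h
    rw [← v_mod γ i, ← v_mod γ j, h]

lemma v_ne_two (i : ℕ) : γ.v (i + 2) ≠ γ.v i := by
  intro h
  have h2 : (i + 2) % γ.n = i % γ.n := (veq_iff γ _ _).mp h
  have : (γ.n : ℤ) ∣ (i : ℤ) - (i + 2 : ℕ) := Nat.ModEq.dvd h2
  have h4 := γ.four_le
  have := Int.le_of_dvd (by push_cast; omega) ((dvd_neg).mpr this)
  push_cast at this ⊢
  omega

def HasEdge (γ : LatticeCycle) (u w : ℤ × ℤ) : Prop :=
  ∃ i, i < γ.n ∧ γ.v i = u ∧ γ.v (i + 1) = w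

noncomputable def eInd (γ : LatticeCycle) (u w : ℤ × ℤ) : ℤ :=
  if HasEdge γ u w then 1 else 0

lemma hasEdge_self (i : ℕ) : HasEdge γ (γ.v i) (γ.v (i + 1)) := by
  refine ⟨i % γ.n, Nat.mod_lt _ (npos γ), v_mod γ i, ?_⟩
  rw [veq_iff]
  exact Nat.ModEq.add_right 1 (Nat.mod_modEq i γ.n)

lemma not_both (u w : ℤ × ℤ) (h1 : HasEdge γ u w) (h2 : HasEdge γ w u) : False := by
  obtain ⟨i, _, hi1, hi2⟩ := h1
  obtain ⟨j, _, hj1, hj2⟩ := h2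
  have e1 : j % γ.n = (i + 1) % γ.n := (veq_iff γ _ _).mp (hj1.trans hi2.symm)
  have e2 : (j + 1) % γ.n = i % γ.n := (veq_iff γ _ _).mp (hj2.trans hi1.symm)
  have e3 : (i + 2) % γ.n = i % γ.n := by
    have := Nat.ModEq.add_right 1 e1
    calc (i + 2) % γ.n = (i + 1 + 1) % γ.n := by ring_nf
    _ = (j + 1) % γ.n := this.symm
    _ = i % γ.n := e2
  exact v_ne_two γ i ((veq_iff γ _ _).mpr e3)

lemma sum_ind (A B : ℤ × ℤ) :
    (∑ i ∈ Finset.range γ.n, if γ.v i = A ∧ γ.v (i + 1) = B then (1 : ℤ) else 0)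
      = eInd γ A B := by
  unfold eInd
  by_cases h : HasEdge γ A B
  · obtain ⟨i0, hi0, h1, h2⟩ := h
    rw [if_pos ⟨i0, hi0, h1, h2⟩]
    rw [Finset.sum_eq_single_of_mem i0 (Finset.mem_range.mpr hi0)]
    · rw [if_pos ⟨h1, h2⟩]
    · intro j hj hne
      rw [if_neg]
      rintro ⟨hj1, hj2⟩
      exact hne (γ.inj j i0 (Finset.mem_range.mp hj) hi0 (hj1.trans h1.symm))
  · rw [if_neg h]
    refine Finset.sum_eq_zero fun j hj => ?_
    rw [if_neg]
    rintro ⟨hj1, hj2⟩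
    exact h ⟨j, Finset.mem_range.mp hj, hj1, hj2⟩

lemma eInd_one {u w : ℤ × ℤ} (h : HasEdge γ u w) : eInd γ u w = 1 := if_pos h
lemma eInd_zero {u w : ℤ × ℤ} (h : ¬ HasEdge γ u w) : eInd γ u w = 0 := if_neg h
lemma eInd_rev {u w : ℤ × ℤ} (h : HasEdge γ u w) : eInd γ w u = 0 :=
  if_neg (fun h2 => not_both γ u w h h2)

lemma icross_diff (u w c : ℤ × ℤ) :
    icross u w c - icross u w (c.1 + 1, c.2)
      = (if u = (c.1 + 1, c.2) ∧ w = (c.1 + 1, c.2 + 1) then (1 : ℤ) else 0)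
        - (if u = (c.1 + 1, c.2 + 1) ∧ w = (c.1 + 1, c.2) then (1 : ℤ) else 0) := by
  obtain ⟨u1, u2⟩ := u; obtain ⟨w1, w2⟩ := w; obtain ⟨c1, c2⟩ := c
  simp only [icross, Prod.mk.injEq]
  split_ifs <;> omega

lemma hcr_diff (u w c : ℤ × ℤ) :
    hcr u w c - hcr u w (c.1, c.2 + 1)
      = (if u = (c.1, c.2 + 1) ∧ w = (c.1 + 1, c.2 + 1) then (1 : ℤ) else 0)
        - (if u = (c.1 + 1, c.2 + 1) ∧ w = (c.1, c.2 + 1) then (1 : ℤ) else 0) := by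
  obtain ⟨u1, u2⟩ := u; obtain ⟨w1, w2⟩ := w; obtain ⟨c1, c2⟩ := c
  simp only [hcr, Prod.mk.injEq]
  split_ifs <;> omega

lemma step' (i : ℕ) : γ.v (i + 1) = γ.v i + (1, 0) ∨ γ.v (i + 1) = γ.v i + (-1, 0) ∨
    γ.v (i + 1) = γ.v i + (0, 1) ∨ γ.v (i + 1) = γ.v i + (0, -1) := by
  rcases γ.step i with h | h | h | h
  · left; rw [sub_eq_iff_eq_add] at h; rw [h]; exact add_comm _ _
  · right; left; rw [sub_eq_iff_eq_add] at h; rw [h]; exact add_comm _ _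
  · right; right; left; rw [sub_eq_iff_eq_add] at h; rw [h]; exact add_comm _ _
  · right; right; right; rw [sub_eq_iff_eq_add] at h; rw [h]; exact add_comm _ _

lemma edge_identity (u w c : ℤ × ℤ)
    (h : w = u + (1, 0) ∨ w = u + (-1, 0) ∨ w = u + (0, 1) ∨ w = u + (0, -1)) :
    icross u w c + hcr u w c = gq c w - gq c u := by
  obtain ⟨u1, u2⟩ := u; obtain ⟨w1, w2⟩ := w; obtain ⟨c1, c2⟩ := c
  simp only [Prod.mk.injEq, Prod.mk_add_mk] at h
  simp only [icross, hcr, gq, Prod.mk.injEq]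
  split_ifs <;> omega

lemma Wc_add_Hc (c : ℤ × ℤ) : Wc γ c + Hc γ c = 0 := by
  unfold Wc Hc
  rw [← Finset.sum_add_distrib]
  have : ∀ i ∈ Finset.range γ.n,
      icross (γ.v i) (γ.v (i + 1)) c + hcr (γ.v i) (γ.v (i + 1)) c
        = gq c (γ.v (i + 1)) - gq c (γ.v i) := fun i _ =>
    edge_identity (γ.v i) (γ.v (i + 1)) c (step' γ i)
  rw [Finset.sum_congr rfl this, Finset.sum_range_sub (fun i => gq c (γ.v i))]
  have : γ.v γ.n = γ.v 0 := by have := γ.periodic 0; simpa using this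
  rw [this, sub_self]

lemma jumpH (c : ℤ × ℤ) :
    Wc γ c = Wc γ (c.1 + 1, c.2)
      + eInd γ (c.1 + 1, c.2) (c.1 + 1, c.2 + 1) - eInd γ (c.1 + 1, c.2 + 1) (c.1 + 1, c.2) := by
  have key : Wc γ c - Wc γ (c.1 + 1, c.2)
      = eInd γ (c.1 + 1, c.2) (c.1 + 1, c.2 + 1) - eInd γ (c.1 + 1, c.2 + 1) (c.1 + 1, c.2) := by
    unfold Wc
    rw [← Finset.sum_sub_distrib]
    rw [Finset.sum_congr rfl (fun i _ => icross_diff (γ.v i) (γ.v (i + 1)) c)]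
    rw [Finset.sum_sub_distrib, sum_ind, sum_ind]
  omega

lemma jumpV (c : ℤ × ℤ) :
    Wc γ (c.1, c.2 + 1) = Wc γ c
      + eInd γ (c.1, c.2 + 1) (c.1 + 1, c.2 + 1) - eInd γ (c.1 + 1, c.2 + 1) (c.1, c.2 + 1) := by
  have key : Hc γ c - Hc γ (c.1, c.2 + 1)
      = eInd γ (c.1, c.2 + 1) (c.1 + 1, c.2 + 1) - eInd γ (c.1 + 1, c.2 + 1) (c.1, c.2 + 1) := by
    unfold Hc
    rw [← Finset.sum_sub_distrib]
    rw [Finset.sum_congr rfl (fun i _ => hcr_diff (γ.v i) (γ.v (i + 1)) c)]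
    rw [Finset.sum_sub_distrib, sum_ind, sum_ind]
  have h1 := Wc_add_Hc γ c
  have h2 := Wc_add_Hc γ (c.1, c.2 + 1)
  omega

lemma jumpH3 (a b : ℤ) : Wc γ (a, b) = Wc γ (a + 1, b)
    + eInd γ (a + 1, b) (a + 1, b + 1) - eInd γ (a + 1, b + 1) (a + 1, b) := jumpH γ (a, b)

lemma jumpV3 (a b : ℤ) : Wc γ (a, b + 1) = Wc γ (a, b)
    + eInd γ (a, b + 1) (a + 1, b + 1) - eInd γ (a + 1, b + 1) (a, b + 1) := jumpV γ (a, b)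

lemma jumpH2 (a b : ℤ) : Wc γ (a - 1, b) = Wc γ (a, b)
    + eInd γ (a, b) (a, b + 1) - eInd γ (a, b + 1) (a, b) := by
  have j := jumpH3 γ (a - 1) b
  rw [show a - 1 + 1 = a from by ring] at j
  exact j

lemma jumpV2 (a b : ℤ) : Wc γ (a, b) = Wc γ (a, b - 1)
    + eInd γ (a, b) (a + 1, b) - eInd γ (a + 1, b) (a, b) := by
  have j := jumpV3 γ a (b - 1)
  rw [show b - 1 + 1 = b from by ring] at j
  exact j

/-- the cell on the left of the directed edge `u → w`. -/
noncomputable def lcell (u w : ℤ × ℤ) : ℤ × ℤ :=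
  if u.1 < w.1 then (u.1, u.2)
  else if w.1 < u.1 then (w.1, w.2 - 1)
  else if u.2 < w.2 then (u.1 - 1, u.2)
  else (u.1, u.2 - 1)

/-- the cell on the right of the directed edge `u → w`. -/
noncomputable def rcell (u w : ℤ × ℤ) : ℤ × ℤ :=
  if u.1 < w.1 then (u.1, u.2 - 1)
  else if w.1 < u.1 then (w.1, w.2)
  else if u.2 < w.2 then (u.1, u.2)
  else (u.1 - 1, u.2 - 1)

lemma lcell_R' (u w : ℤ × ℤ) (h : w = u + (1, 0)) : lcell u w = (u.1, u.2) := by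
  obtain ⟨a, b⟩ := u; subst h
  simp only [lcell, Prod.mk_add_mk]
  split_ifs <;> first | (exfalso; omega) | (rw [Prod.mk.injEq]; constructor <;> ring)

lemma lcell_L' (u w : ℤ × ℤ) (h : w = u + (-1, 0)) : lcell u w = (u.1 - 1, u.2 - 1) := by
  obtain ⟨a, b⟩ := u; subst h
  simp only [lcell, Prod.mk_add_mk]
  split_ifs <;> first | (exfalso; omega) | (rw [Prod.mk.injEq]; constructor <;> ring)

lemma lcell_U' (u w : ℤ × ℤ) (h : w = u + (0, 1)) : lcell u w = (u.1 - 1, u.2) := by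
  obtain ⟨a, b⟩ := u; subst h
  simp only [lcell, Prod.mk_add_mk]
  split_ifs <;> first | (exfalso; omega) | (rw [Prod.mk.injEq]; constructor <;> ring)

lemma lcell_D' (u w : ℤ × ℤ) (h : w = u + (0, -1)) : lcell u w = (u.1, u.2 - 1) := by
  obtain ⟨a, b⟩ := u; subst h
  simp only [lcell, Prod.mk_add_mk]
  split_ifs <;> first | (exfalso; omega) | (rw [Prod.mk.injEq]; constructor <;> ring)

lemma rcell_R' (u w : ℤ × ℤ) (h : w = u + (1, 0)) : rcell u w = (u.1, u.2 - 1) := by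
  obtain ⟨a, b⟩ := u; subst h
  simp only [rcell, Prod.mk_add_mk]
  split_ifs <;> first | (exfalso; omega) | (rw [Prod.mk.injEq]; constructor <;> ring)

lemma rcell_L' (u w : ℤ × ℤ) (h : w = u + (-1, 0)) : rcell u w = (u.1 - 1, u.2) := by
  obtain ⟨a, b⟩ := u; subst h
  simp only [rcell, Prod.mk_add_mk]
  split_ifs <;> first | (exfalso; omega) | (rw [Prod.mk.injEq]; constructor <;> ring)

lemma rcell_U' (u w : ℤ × ℤ) (h : w = u + (0, 1)) : rcell u w = (u.1, u.2) := by
  obtain ⟨a, b⟩ := u; subst h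
  simp only [rcell, Prod.mk_add_mk]
  split_ifs <;> first | (exfalso; omega) | (rw [Prod.mk.injEq]; constructor <;> ring)

lemma rcell_D' (u w : ℤ × ℤ) (h : w = u + (0, -1)) : rcell u w = (u.1 - 1, u.2 - 1) := by
  obtain ⟨a, b⟩ := u; subst h
  simp only [rcell, Prod.mk_add_mk]
  split_ifs <;> first | (exfalso; omega) | (rw [Prod.mk.injEq]; constructor <;> ring)

/-- the left cell of any edge has winding one more than the right cell. -/
lemma lc_rc (i : ℕ) :
    Wc γ (lcell (γ.v i) (γ.v (i + 1))) = Wc γ (rcell (γ.v i) (γ.v (i + 1))) + 1 := by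
  obtain ⟨a, b, hv⟩ : ∃ a b, γ.v i = (a, b) := ⟨_, _, rfl⟩
  rcases step' γ i with h1 | h1 | h1 | h1
  · -- R
    have hm : γ.v (i + 1) = (a + 1, b) := by
      rw [h1, hv, Prod.mk_add_mk, Prod.mk.injEq]; constructor <;> ring
    have he : HasEdge γ (a, b) (a + 1, b) := by rw [← hv, ← hm]; exact hasEdge_self γ i
    rw [lcell_R' _ _ h1, rcell_R' _ _ h1, hv]
    show Wc γ (a, b) = Wc γ (a, b - 1) + 1
    have j := jumpV2 γ a b
    rw [eInd_one γ he, eInd_rev γ he] at j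
    linarith
  · -- L
    have hm : γ.v (i + 1) = (a - 1, b) := by
      rw [h1, hv, Prod.mk_add_mk, Prod.mk.injEq]; constructor <;> ring
    have he : HasEdge γ (a, b) (a - 1, b) := by rw [← hv, ← hm]; exact hasEdge_self γ i
    rw [lcell_L' _ _ h1, rcell_L' _ _ h1, hv]
    show Wc γ (a - 1, b - 1) = Wc γ (a - 1, b) + 1
    have j := jumpV2 γ (a - 1) b
    rw [show a - 1 + 1 = a from by ring] at j
    rw [eInd_one γ he, eInd_rev γ he] at j
    linarith
  · -- U
    have hm : γ.v (i + 1) = (a, b + 1) := by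
      rw [h1, hv, Prod.mk_add_mk, Prod.mk.injEq]; constructor <;> ring
    have he : HasEdge γ (a, b) (a, b + 1) := by rw [← hv, ← hm]; exact hasEdge_self γ i
    rw [lcell_U' _ _ h1, rcell_U' _ _ h1, hv]
    show Wc γ (a - 1, b) = Wc γ (a, b) + 1
    have j := jumpH2 γ a b
    rw [eInd_one γ he, eInd_rev γ he] at j
    linarith
  · -- D
    have hm : γ.v (i + 1) = (a, b - 1) := by
      rw [h1, hv, Prod.mk_add_mk, Prod.mk.injEq]; constructor <;> ring
    have he : HasEdge γ (a, b) (a, b - 1) := by rw [← hv, ← hm]; exact hasEdge_self γ i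
    rw [lcell_D' _ _ h1, rcell_D' _ _ h1, hv]
    show Wc γ (a, b - 1) = Wc γ (a - 1, b - 1) + 1
    have j := jumpH2 γ a (b - 1)
    rw [show b - 1 + 1 = b from by ring] at j
    rw [eInd_one γ he, eInd_rev γ he] at j
    linarith

lemma v_ne_two' (i : ℕ) : γ.v (i + 1 + 1) ≠ γ.v i := v_ne_two γ i

lemma no_edge_to (i : ℕ) (X : ℤ × ℤ) (hX : X ≠ γ.v i) : ¬ HasEdge γ X (γ.v (i + 1)) := by
  rintro ⟨k, _, e1, e2⟩
  have h : (k + 1) % γ.n = (i + 1) % γ.n := (veq_iff γ _ _).mp e2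
  have hk : k % γ.n = i % γ.n := Nat.ModEq.add_right_cancel' 1 h
  exact hX (e1.symm.trans ((veq_iff γ _ _).mpr hk))

lemma no_edge_from (i : ℕ) (X : ℤ × ℤ) (hX : X ≠ γ.v (i + 1 + 1)) :
    ¬ HasEdge γ (γ.v (i + 1)) X := by
  rintro ⟨k, _, e1, e2⟩
  have h : k % γ.n = (i + 1) % γ.n := (veq_iff γ _ _).mp e1
  have hk : (k + 1) % γ.n = (i + 1 + 1) % γ.n := Nat.ModEq.add_right 1 h
  exact hX (e2.symm.trans ((veq_iff γ _ _).mpr hk))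

/-- consecutive edges have the same left-cell winding value. -/
lemma class_step (i : ℕ) :
    Wc γ (lcell (γ.v (i + 1)) (γ.v (i + 1 + 1))) = Wc γ (lcell (γ.v i) (γ.v (i + 1))) := by
  obtain ⟨a, b, hv⟩ : ∃ a b, γ.v i = (a, b) := ⟨_, _, rfl⟩
  rcases step' γ i with h1 | h1 | h1 | h1 <;> rcases step' γ (i + 1) with h2 | h2 | h2 | h2
  · -- R R
    have hm : γ.v (i + 1) = (a + 1, b) := by
      rw [h1, hv, Prod.mk_add_mk, Prod.mk.injEq]; constructor <;> ring
    have hw : γ.v (i + 1 + 1) = (a + 1 + 1, b) := by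
      rw [h2, hm, Prod.mk_add_mk, Prod.mk.injEq]; constructor <;> ring
    have n1 : ¬ HasEdge γ (a + 1, b) (a + 1, b + 1) := by
      rw [← hm]
      exact no_edge_from γ i _ (by rw [hw]; simp only [ne_eq, Prod.mk.injEq]; omega)
    have n2 : ¬ HasEdge γ (a + 1, b + 1) (a + 1, b) := by
      rw [← hm]
      exact no_edge_to γ i _ (by rw [hv]; simp only [ne_eq, Prod.mk.injEq]; omega)
    have j := jumpH3 γ a b
    rw [eInd_zero γ n1, eInd_zero γ n2] at j
    rw [lcell_R' _ _ h2, lcell_R' _ _ h1, hm, hv]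
    show Wc γ (a + 1, b) = Wc γ (a, b)
    linarith
  · -- R L : reversal
    have hm : γ.v (i + 1) = (a + 1, b) := by
      rw [h1, hv, Prod.mk_add_mk, Prod.mk.injEq]; constructor <;> ring
    have hw : γ.v (i + 1 + 1) = (a, b) := by
      rw [h2, hm, Prod.mk_add_mk, Prod.mk.injEq]; constructor <;> ring
    exact absurd (hw.trans hv.symm) (v_ne_two' γ i)
  · -- R U : left cells agree
    have hm : γ.v (i + 1) = (a + 1, b) := by
      rw [h1, hv, Prod.mk_add_mk, Prod.mk.injEq]; constructor <;> ring
    rw [lcell_U' _ _ h2, lcell_R' _ _ h1, hm, hv]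
    show Wc γ (a + 1 - 1, b) = Wc γ (a, b)
    rw [show a + 1 - 1 = a from by ring]
  · -- R D : right cells agree
    have hm : γ.v (i + 1) = (a + 1, b) := by
      rw [h1, hv, Prod.mk_add_mk, Prod.mk.injEq]; constructor <;> ring
    rw [lc_rc γ (i + 1), lc_rc γ i, rcell_D' _ _ h2, rcell_R' _ _ h1, hm, hv]
    show Wc γ (a + 1 - 1, b - 1) + 1 = Wc γ (a, b - 1) + 1
    rw [show a + 1 - 1 = a from by ring]
  · -- L R : reversal
    have hm : γ.v (i + 1) = (a - 1, b) := by
      rw [h1, hv, Prod.mk_add_mk, Prod.mk.injEq]; constructor <;> ring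
    have hw : γ.v (i + 1 + 1) = (a, b) := by
      rw [h2, hm, Prod.mk_add_mk, Prod.mk.injEq]; constructor <;> ring
    exact absurd (hw.trans hv.symm) (v_ne_two' γ i)
  · -- L L
    have hm : γ.v (i + 1) = (a - 1, b) := by
      rw [h1, hv, Prod.mk_add_mk, Prod.mk.injEq]; constructor <;> ring
    have hw : γ.v (i + 1 + 1) = (a - 1 - 1, b) := by
      rw [h2, hm, Prod.mk_add_mk, Prod.mk.injEq]; constructor <;> ring
    have n1 : ¬ HasEdge γ (a - 1, b - 1) (a - 1, b) := by
      rw [← hm]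
      exact no_edge_to γ i _ (by rw [hv]; simp only [ne_eq, Prod.mk.injEq]; omega)
    have n2 : ¬ HasEdge γ (a - 1, b) (a - 1, b - 1) := by
      rw [← hm]
      exact no_edge_from γ i _ (by rw [hw]; simp only [ne_eq, Prod.mk.injEq]; omega)
    have j := jumpH3 γ (a - 1 - 1) (b - 1)
    rw [show a - 1 - 1 + 1 = a - 1 from by ring, show b - 1 + 1 = b from by ring] at j
    rw [eInd_zero γ n1, eInd_zero γ n2] at j
    rw [lcell_L' _ _ h2, lcell_L' _ _ h1, hm, hv]
    show Wc γ (a - 1 - 1, b - 1) = Wc γ (a - 1, b - 1)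
    linarith
  · -- L U : right cells agree
    have hm : γ.v (i + 1) = (a - 1, b) := by
      rw [h1, hv, Prod.mk_add_mk, Prod.mk.injEq]; constructor <;> ring
    rw [lc_rc γ (i + 1), lc_rc γ i, rcell_U' _ _ h2, rcell_L' _ _ h1, hm, hv]
  · -- L D : left cells agree
    have hm : γ.v (i + 1) = (a - 1, b) := by
      rw [h1, hv, Prod.mk_add_mk, Prod.mk.injEq]; constructor <;> ring
    rw [lcell_D' _ _ h2, lcell_L' _ _ h1, hm, hv]
  · -- U R : right cells agree
    have hm : γ.v (i + 1) = (a, b + 1) := by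
      rw [h1, hv, Prod.mk_add_mk, Prod.mk.injEq]; constructor <;> ring
    rw [lc_rc γ (i + 1), lc_rc γ i, rcell_R' _ _ h2, rcell_U' _ _ h1, hm, hv]
    show Wc γ (a, b + 1 - 1) + 1 = Wc γ (a, b) + 1
    rw [show b + 1 - 1 = b from by ring]
  · -- U L : left cells agree
    have hm : γ.v (i + 1) = (a, b + 1) := by
      rw [h1, hv, Prod.mk_add_mk, Prod.mk.injEq]; constructor <;> ring
    rw [lcell_L' _ _ h2, lcell_U' _ _ h1, hm, hv]
    show Wc γ (a - 1, b + 1 - 1) = Wc γ (a - 1, b)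
    rw [show b + 1 - 1 = b from by ring]
  · -- U U
    have hm : γ.v (i + 1) = (a, b + 1) := by
      rw [h1, hv, Prod.mk_add_mk, Prod.mk.injEq]; constructor <;> ring
    have hw : γ.v (i + 1 + 1) = (a, b + 1 + 1) := by
      rw [h2, hm, Prod.mk_add_mk, Prod.mk.injEq]; constructor <;> ring
    have n1 : ¬ HasEdge γ (a - 1, b + 1) (a, b + 1) := by
      rw [← hm]
      exact no_edge_to γ i _ (by rw [hv]; simp only [ne_eq, Prod.mk.injEq]; omega)
    have n2 : ¬ HasEdge γ (a, b + 1) (a - 1, b + 1) := by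
      rw [← hm]
      exact no_edge_from γ i _ (by rw [hw]; simp only [ne_eq, Prod.mk.injEq]; omega)
    have j := jumpV3 γ (a - 1) b
    rw [show a - 1 + 1 = a from by ring] at j
    rw [eInd_zero γ n1, eInd_zero γ n2] at j
    rw [lcell_U' _ _ h2, lcell_U' _ _ h1, hm, hv]
    show Wc γ (a - 1, b + 1) = Wc γ (a - 1, b)
    linarith
  · -- U D : reversal
    have hm : γ.v (i + 1) = (a, b + 1) := by
      rw [h1, hv, Prod.mk_add_mk, Prod.mk.injEq]; constructor <;> ring
    have hw : γ.v (i + 1 + 1) = (a, b) := by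
      rw [h2, hm, Prod.mk_add_mk, Prod.mk.injEq]; constructor <;> ring
    exact absurd (hw.trans hv.symm) (v_ne_two' γ i)
  · -- D R : left cells agree
    have hm : γ.v (i + 1) = (a, b - 1) := by
      rw [h1, hv, Prod.mk_add_mk, Prod.mk.injEq]; constructor <;> ring
    rw [lcell_R' _ _ h2, lcell_D' _ _ h1, hm, hv]
  · -- D L : right cells agree
    have hm : γ.v (i + 1) = (a, b - 1) := by
      rw [h1, hv, Prod.mk_add_mk, Prod.mk.injEq]; constructor <;> ring
    rw [lc_rc γ (i + 1), lc_rc γ i, rcell_L' _ _ h2, rcell_D' _ _ h1, hm, hv]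
  · -- D U : reversal
    have hm : γ.v (i + 1) = (a, b - 1) := by
      rw [h1, hv, Prod.mk_add_mk, Prod.mk.injEq]; constructor <;> ring
    have hw : γ.v (i + 1 + 1) = (a, b) := by
      rw [h2, hm, Prod.mk_add_mk, Prod.mk.injEq]; constructor <;> ring
    exact absurd (hw.trans hv.symm) (v_ne_two' γ i)
  · -- D D
    have hm : γ.v (i + 1) = (a, b - 1) := by
      rw [h1, hv, Prod.mk_add_mk, Prod.mk.injEq]; constructor <;> ring
    have hw : γ.v (i + 1 + 1) = (a, b - 1 - 1) := by
      rw [h2, hm, Prod.mk_add_mk, Prod.mk.injEq]; constructor <;> ring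
    have n1 : ¬ HasEdge γ (a, b - 1) (a + 1, b - 1) := by
      rw [← hm]
      exact no_edge_from γ i _ (by rw [hw]; simp only [ne_eq, Prod.mk.injEq]; omega)
    have n2 : ¬ HasEdge γ (a + 1, b - 1) (a, b - 1) := by
      rw [← hm]
      exact no_edge_to γ i _ (by rw [hv]; simp only [ne_eq, Prod.mk.injEq]; omega)
    have j := jumpV3 γ a (b - 1 - 1)
    rw [show b - 1 - 1 + 1 = b - 1 from by ring] at j
    rw [eInd_zero γ n1, eInd_zero γ n2] at j
    rw [lcell_D' _ _ h2, lcell_D' _ _ h1, hm, hv]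
    show Wc γ (a, b - 1 - 1) = Wc γ (a, b - 1)
    linarith

/-- the common left-cell winding value of the cycle. -/
noncomputable def Kc (γ : LatticeCycle) : ℤ := Wc γ (lcell (γ.v 0) (γ.v (0 + 1)))

lemma Wc_lcell (i : ℕ) : Wc γ (lcell (γ.v i) (γ.v (i + 1))) = Kc γ := by
  induction i with
  | zero => rfl
  | succ k ih => exact (class_step γ k).trans ih

lemma Wc_rcell (i : ℕ) : Wc γ (rcell (γ.v i) (γ.v (i + 1))) = Kc γ - 1 := by
  have h1 := lc_rc γ i
  have h2 := Wc_lcell γ i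
  linarith

/-- maximal x-coordinate on the cycle. -/
noncomputable def Mx (γ : LatticeCycle) : ℤ :=
  ((Finset.range γ.n).image fun i => (γ.v i).1).max'
    (Finset.Nonempty.image (Finset.nonempty_range_iff.mpr (npos γ).ne') _)

lemma vx_le (t : ℕ) : (γ.v t).1 ≤ Mx γ :=
  Finset.le_max' _ _ (Finset.mem_image.mpr ⟨t % γ.n,
    Finset.mem_range.mpr (Nat.mod_lt _ (npos γ)),
    by show (γ.v (t % γ.n)).1 = (γ.v t).1; rw [v_mod]⟩)

lemma Wc_far (c : ℤ × ℤ) (h : Mx γ ≤ c.1) : Wc γ c = 0 := by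
  refine Finset.sum_eq_zero fun i _ => ?_
  unfold icross
  split_ifs with h1 h2
  · obtain ⟨-, h1b, -⟩ := h1
    exact absurd h1b (by have := vx_le γ i; omega)
  · obtain ⟨-, h2b, -⟩ := h2
    exact absurd h2b (by have := vx_le γ (i + 1); omega)
  · rfl

lemma Wc_cases : ∀ (k : ℕ) (c : ℤ × ℤ), Mx γ - c.1 ≤ (k : ℤ) →
    Wc γ c = 0 ∨ Wc γ c = Kc γ ∨ Wc γ c = Kc γ - 1 := by
  intro k
  induction k with
  | zero =>
      intro c hc
      exact Or.inl (Wc_far γ c (by push_cast at hc; linarith))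
  | succ k ih =>
      intro c hc
      by_cases hM : Mx γ ≤ c.1
      · exact Or.inl (Wc_far γ c hM)
      push_neg at hM
      have j := jumpH3 γ c.1 c.2
      rw [Prod.mk.eta] at j
      by_cases h1 : HasEdge γ (c.1 + 1, c.2) (c.1 + 1, c.2 + 1)
      · right; left
        obtain ⟨i0, -, e1, e2⟩ := h1
        have hu : γ.v (i0 + 1) = γ.v i0 + (0, 1) := by
          rw [e1, e2, Prod.mk_add_mk, Prod.mk.injEq]; constructor <;> ring
        have t := Wc_lcell γ i0
        rw [lcell_U' _ _ hu, e1] at t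
        have t2 : Wc γ (c.1 + 1 - 1, c.2) = Kc γ := t
        rw [show c.1 + 1 - 1 = c.1 from by ring, Prod.mk.eta] at t2
        exact t2
      by_cases h2 : HasEdge γ (c.1 + 1, c.2 + 1) (c.1 + 1, c.2)
      · right; right
        obtain ⟨i0, -, e1, e2⟩ := h2
        have hu : γ.v (i0 + 1) = γ.v i0 + (0, -1) := by
          rw [e1, e2, Prod.mk_add_mk, Prod.mk.injEq]; constructor <;> ring
        have t := Wc_rcell γ i0
        rw [rcell_D' _ _ hu, e1] at t
        have t2 : Wc γ (c.1 + 1 - 1, c.2 + 1 - 1) = Kc γ - 1 := t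
        rw [show c.1 + 1 - 1 = c.1 from by ring, show c.2 + 1 - 1 = c.2 from by ring,
          Prod.mk.eta] at t2
        exact t2
      · rw [eInd_zero γ h1, eInd_zero γ h2] at j
        have j2 : Wc γ c = Wc γ (c.1 + 1, c.2) := by linarith
        have hb : Mx γ - (c.1 + 1, c.2).1 ≤ (k : ℤ) := by
          show Mx γ - (c.1 + 1) ≤ (k : ℤ)
          push_cast at hc
          linarith
        rcases ih (c.1 + 1, c.2) hb with h | h | h
        · exact Or.inl (j2.trans h)
        · exact Or.inr (Or.inl (j2.trans h))
        · exact Or.inr (Or.inr (j2.trans h))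

lemma Wc_mem (c : ℤ × ℤ) : Wc γ c = 0 ∨ Wc γ c = Kc γ ∨ Wc γ c = Kc γ - 1 :=
  Wc_cases γ (Mx γ - c.1).toNat c (Int.self_le_toNat _)

lemma K01 : Kc γ = 0 ∨ Kc γ = 1 := by
  have hmem : Mx γ ∈ (Finset.range γ.n).image fun i => (γ.v i).1 :=
    Finset.max'_mem _ _
  obtain ⟨i0, -, hx0⟩ := Finset.mem_image.mp hmem
  have hx : (γ.v i0).1 = Mx γ := hx0
  set j := i0 + (γ.n - 1) with hjdef
  have hj1 : j + 1 = i0 + γ.n := by have := npos γ; omega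
  have hvj1 : γ.v (j + 1) = γ.v i0 := by rw [hj1]; exact γ.periodic i0
  obtain ⟨c, d, hm⟩ : ∃ c d, γ.v (j + 1) = (c, d) := ⟨_, _, rfl⟩
  have hc : c = Mx γ := by rw [← hx, ← hvj1, hm]
  rcases step' γ j with h1 | h1 | h1 | h1
  · -- incoming edge is R : look at outgoing edge
    rcases step' γ (j + 1) with h2 | h2 | h2 | h2
    · -- R : x grows beyond max, absurd
      have hww : γ.v (j + 1 + 1) = (c + 1, d) := by
        rw [h2, hm, Prod.mk_add_mk, Prod.mk.injEq]; constructor <;> ring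
      have := vx_le γ (j + 1 + 1)
      rw [hww] at this
      have : c + 1 ≤ Mx γ := this
      exfalso; linarith
    · -- L : reversal, absurd
      have heq : γ.v (j + 1 + 1) = γ.v j := by
        rw [h2, h1, Prod.ext_iff]
        constructor <;> simp only [Prod.fst_add, Prod.snd_add] <;> ring
      exact absurd heq (v_ne_two' γ j)
    · -- U : outgoing vertical edge at the max column, right cell east has winding 0
      right
      have t := Wc_rcell γ (j + 1)
      rw [rcell_U' _ _ h2, hm] at t
      have t2 : Wc γ (c, d) = Kc γ - 1 := t
      have f : Wc γ (c, d) = 0 := Wc_far γ (c, d) (by show Mx γ ≤ c; linarith)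
      linarith
    · -- D
      left
      have t := Wc_lcell γ (j + 1)
      rw [lcell_D' _ _ h2, hm] at t
      have t2 : Wc γ (c, d - 1) = Kc γ := t
      have f : Wc γ (c, d - 1) = 0 := Wc_far γ (c, d - 1) (by show Mx γ ≤ c; linarith)
      linarith
  · -- incoming edge is L : x of previous vertex beyond max, absurd
    obtain ⟨e, f, hvj⟩ : ∃ e f, γ.v j = (e, f) := ⟨_, _, rfl⟩
    have hef : γ.v (j + 1) = (e - 1, f) := by
      rw [h1, hvj, Prod.mk_add_mk, Prod.mk.injEq]; constructor <;> ring
    have h3 := hm.symm.trans hef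
    rw [Prod.mk.injEq] at h3
    have := vx_le γ j
    rw [hvj] at this
    have : e ≤ Mx γ := this
    exfalso
    obtain ⟨h3a, -⟩ := h3
    linarith
  · -- incoming edge is U : right cell is east of a max-column vertical edge
    right
    obtain ⟨e, f, hvj⟩ : ∃ e f, γ.v j = (e, f) := ⟨_, _, rfl⟩
    have hef : γ.v (j + 1) = (e, f + 1) := by
      rw [h1, hvj, Prod.mk_add_mk, Prod.mk.injEq]; constructor <;> ring
    have h3 := hm.symm.trans hef
    rw [Prod.mk.injEq] at h3
    obtain ⟨h3a, -⟩ := h3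
    have t := Wc_rcell γ j
    rw [rcell_U' _ _ h1, hvj] at t
    have t2 : Wc γ (e, f) = Kc γ - 1 := t
    have fa : Wc γ (e, f) = 0 := Wc_far γ (e, f) (by show Mx γ ≤ e; linarith)
    linarith
  · -- incoming edge is D
    left
    obtain ⟨e, f, hvj⟩ : ∃ e f, γ.v j = (e, f) := ⟨_, _, rfl⟩
    have hef : γ.v (j + 1) = (e, f - 1) := by
      rw [h1, hvj, Prod.mk_add_mk, Prod.mk.injEq]; constructor <;> ring
    have h3 := hm.symm.trans hef
    rw [Prod.mk.injEq] at h3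
    obtain ⟨h3a, -⟩ := h3
    have t := Wc_lcell γ j
    rw [lcell_D' _ _ h1, hvj] at t
    have t2 : Wc γ (e, f - 1) = Kc γ := t
    have fa : Wc γ (e, f - 1) = 0 := Wc_far γ (e, f - 1) (by show Mx γ ≤ e; linarith)
    linarith

end JordanGrid

/-- Every oriented simple lattice cycle is either counterclockwise
oriented or clockwise oriented. -/
theorem every_lattice_cycle_ccw_or_cw (γ : LatticeCycle) : γ.ccw ∨ γ.cw := by
  rcases JordanGrid.K01 γ with h | h
  · right
    intro p _
    have hw := JordanGrid.wind_eq γ p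
    have hm := JordanGrid.Wc_mem γ (⌊p.1⌋, ⌊p.2⌋)
    rw [h] at hm
    rw [hw]
    rcases hm with h1 | h1 | h1
    · right; exact h1
    · right; exact h1
    · left; rw [h1]; ring
  · left
    intro p _
    have hw := JordanGrid.wind_eq γ p
    have hm := JordanGrid.Wc_mem γ (⌊p.1⌋, ⌊p.2⌋)
    rw [h] at hm
    rw [hw]
    rcases hm with h1 | h1 | h1
    · left; exact h1
    · right; exact h1
    · left; rw [h1]; ring
end

section
/- Let γ be an oriented simple lattice cycle and let p ∈ ℝ² be a point not in the image of γ. Then the signed number of directed vertical edges of γ crossing the rightward horizontal ray from p equals the signed number of directed horizontal edges of γ crossing the upward vertical ray from p; that is, wind(γ,p) equals the count in which an edge from (a+1,b) to (a,b) contributes +1 and an edge from (a,b) to (a+1,b) contributes −1 whenever b > p₂ and a ≤ p₁ < a+1, where p = (p₁,p₂). In other words, the winding number can be computed by counting signed crossings with a ray in any coordinate direction. -/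
open scoped Classical

/-- Signed crossing of the directed edge `u → w` with the upward vertical ray
from `p`: an edge from `(a+1,b)` to `(a,b)` contributes `+1`, and an edge from
`(a,b)` to `(a+1,b)` contributes `-1`, whenever `b > p₂` and `a ≤ p₁ < a + 1`. -/
noncomputable def hcross (u w : ℤ × ℤ) (p : ℝ × ℝ) : ℤ :=
  if u = (w.1 + 1, w.2) ∧ p.2 < (w.2 : ℝ) ∧ (w.1 : ℝ) ≤ p.1 ∧ p.1 < (w.1 : ℝ) + 1 then 1
  else if w = (u.1 + 1, u.2) ∧ p.2 < (u.2 : ℝ) ∧ (u.1 : ℝ) ≤ p.1 ∧ p.1 < (u.1 : ℝ) + 1 then -1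
  else 0

/-- The signed number of directed horizontal edges of `γ` crossing the upward
vertical ray from `p`. -/
noncomputable def hwind (γ : LatticeCycle) (p : ℝ × ℝ) : ℤ :=
  ∑ i ∈ Finset.range γ.n, hcross (γ.v i) (γ.v (i + 1)) p

noncomputable def quad (p : ℝ × ℝ) (v : ℤ × ℤ) : ℤ :=
  if p.1 < (v.1 : ℝ) ∧ p.2 < (v.2 : ℝ) then 1 else 0

lemma cross_key (p : ℝ × ℝ) (u w : ℤ × ℤ)
    (h : w - u = (1, 0) ∨ w - u = (-1, 0) ∨ w - u = (0, 1) ∨ w - u = (0, -1)) :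
    vcross u w p - hcross u w p = quad p w - quad p u := by
  obtain ⟨a, b⟩ := u
  obtain ⟨c, d⟩ := w
  simp only [Prod.mk_sub_mk, Prod.mk.injEq] at h
  rcases h with ⟨h1, h2⟩ | ⟨h1, h2⟩ | ⟨h1, h2⟩ | ⟨h1, h2⟩
  · have hc : c = a + 1 := by omega
    have hd : d = b := by omega
    subst hc hd
    have e1 : ¬(a + 1 = a) := by omega
    have e2 : ¬(a = a + 1) := by omega
    have e3 : ¬(a = a + 1 + 1) := by omega
    simp only [vcross, hcross, quad, Prod.mk.injEq, e1, e2, e3, false_and, and_false,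
      true_and, and_true, if_false, eq_self_iff_true, and_self]
    push_cast
    split_ifs
    all_goals try norm_num
    all_goals exfalso
    all_goals try simp only [not_and_or, not_lt, not_le] at *
    all_goals casesm* _ ∧ _, _ ∨ _
    all_goals linarith
  · have hc : c = a - 1 := by omega
    have hd : d = b := by omega
    subst hc hd
    have e1 : ¬(a - 1 = a) := by omega
    have e2 : ¬(a = a - 1) := by omega
    have e3 : ¬(a - 1 = a + 1) := by omega
    have t1 : (a = a - 1 + 1) = True := eq_true (by omega)
    simp only [vcross, hcross, quad, Prod.mk.injEq, e1, e2, e3, t1, false_and, and_false,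
      true_and, and_true, if_false, eq_self_iff_true, and_self]
    push_cast
    split_ifs
    all_goals try norm_num
    all_goals exfalso
    all_goals try simp only [not_and_or, not_lt, not_le] at *
    all_goals casesm* _ ∧ _, _ ∨ _
    all_goals linarith
  · have hc : c = a := by omega
    have hd : d = b + 1 := by omega
    subst hc hd
    have e1 : ¬(b = b + 1 + 1) := by omega
    have e2 : ¬(c = c + 1) := by omega
    have e3 : ¬(b = b + 1) := by omega
    have e4 : ¬(b + 1 = b) := by omega
    simp only [vcross, hcross, quad, Prod.mk.injEq, e1, e2, e3, e4, false_and, and_false,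
      true_and, and_true, if_false, eq_self_iff_true, and_self]
    push_cast
    split_ifs
    all_goals try norm_num
    all_goals exfalso
    all_goals try simp only [not_and_or, not_lt, not_le] at *
    all_goals casesm* _ ∧ _, _ ∨ _
    all_goals linarith
  · have hc : c = a := by omega
    have hd : d = b - 1 := by omega
    subst hc hd
    have e1 : ¬(b - 1 = b + 1) := by omega
    have e2 : ¬(c = c + 1) := by omega
    have t1 : (b = b - 1 + 1) = True := eq_true (by omega)
    simp only [vcross, hcross, quad, Prod.mk.injEq, e1, e2, t1, false_and, and_false,
      true_and, and_true, if_false, eq_self_iff_true, and_self]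
    push_cast
    split_ifs
    all_goals try norm_num
    all_goals exfalso
    all_goals try simp only [not_and_or, not_lt, not_le] at *
    all_goals casesm* _ ∧ _, _ ∨ _
    all_goals linarith

/-- For `p` not in the image of `γ`, the signed number of vertical
edges crossing the rightward horizontal ray from `p` equals the signed number of
horizontal edges crossing the upward vertical ray from `p`. -/
theorem wind_eq_hwind (γ : LatticeCycle) (p : ℝ × ℝ) (hp : p ∉ γ.image) :
    wind γ p = hwind γ p := by
  have key : wind γ p - hwind γ p = 0 := by
    have := Finset.sum_range_sub (fun i => quad p (γ.v i)) γ.n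
    calc wind γ p - hwind γ p
        = ∑ i ∈ Finset.range γ.n,
            (vcross (γ.v i) (γ.v (i + 1)) p - hcross (γ.v i) (γ.v (i + 1)) p) := by
          rw [wind, hwind, Finset.sum_sub_distrib]
      _ = ∑ i ∈ Finset.range γ.n, (quad p (γ.v (i + 1)) - quad p (γ.v i)) := by
          refine Finset.sum_congr rfl fun i _ => ?_
          exact cross_key p (γ.v i) (γ.v (i + 1)) (γ.step i)
      _ = quad p (γ.v γ.n) - quad p (γ.v 0) := Finset.sum_range_sub (fun i => quad p (γ.v i)) γ.n
      _ = 0 := by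
          have := γ.periodic 0
          simp only [Nat.zero_add] at this
          rw [this, sub_self]
  linarith [key]
end

section
/- Let γ be an oriented simple lattice cycle and let v ∈ ℤ² be a lattice point not in the image of γ. Then wind(γ,u) = wind(γ,v) for all four points u ∈ N_v; consequently metricw(γ,v) = topw(γ,v) = wind(γ,v). -/
open scoped Classical

/-- Auxiliary potential function for the telescoping argument. -/
def Fk (x y k l : ℤ) (u : ℤ × ℤ) : ℤ :=
  if l = -1 ∧ u.2 = y ∧ 2 * x + k < 2 * u.1 then 1 else 0

lemma corner_zero (x y : ℤ) : corner (x, y) 0 0 = toR (x, y) := by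
  simp [corner, toR]

lemma vcross_corner (u w : ℤ × ℤ) (x y k l : ℤ) :
    vcross u w (corner (x, y) k l) =
      (if w = (u.1, u.2 + 1) ∧ 2*x + k < 2*u.1 ∧ 2*u.2 ≤ 2*y + l ∧ 2*y + l < 2*u.2 + 2 then 1
       else if u = (w.1, w.2 + 1) ∧ 2*x + k < 2*w.1 ∧ 2*w.2 ≤ 2*y + l ∧ 2*y + l < 2*w.2 + 2 then -1
       else 0) := by
  have main : ∀ a b : ℤ,
      ((corner (x, y) k l).1 < (a : ℝ) ∧ (b : ℝ) ≤ (corner (x, y) k l).2 ∧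
        (corner (x, y) k l).2 < (b : ℝ) + 1) ↔
      (2*x + k < 2*a ∧ 2*b ≤ 2*y + l ∧ 2*y + l < 2*b + 2) := by
    intro a b
    simp only [corner]
    constructor <;> rintro ⟨h1, h2, h3⟩ <;>
      exact ⟨by rify at h1 ⊢; linarith, by rify at h2 ⊢; linarith, by rify at h3 ⊢; linarith⟩
  unfold vcross
  rw [if_congr (and_congr_right' (main u.1 u.2)) rfl
      (if_congr (and_congr_right' (main w.1 w.2)) rfl rfl)]

set_option maxHeartbeats 1000000 in
lemma vcross_key (x y k l : ℤ) (hk : k = -1 ∨ k = 1) (hl : l = -1 ∨ l = 1) (u w : ℤ × ℤ)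
    (hstep : w - u = (1, 0) ∨ w - u = (-1, 0) ∨ w - u = (0, 1) ∨ w - u = (0, -1))
    (hu : u ≠ (x, y)) (hw : w ≠ (x, y)) :
    vcross u w (corner (x, y) k l) - vcross u w (toR (x, y)) =
      Fk x y k l w - Fk x y k l u := by
  rw [← corner_zero, vcross_corner, vcross_corner]
  obtain ⟨a, b⟩ := u
  obtain ⟨c, d⟩ := w
  simp only [Prod.mk.injEq, Prod.mk_sub_mk, Prod.ext_iff, ne_eq, not_and] at hstep hu hw
  unfold Fk
  simp only [Prod.mk.injEq]
  rcases hstep with ⟨h1, h2⟩ | ⟨h1, h2⟩ | ⟨h1, h2⟩ | ⟨h1, h2⟩ <;>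
    [(obtain ⟨rfl, rfl⟩ : c = a + 1 ∧ d = b := by omega);
     (obtain ⟨rfl, rfl⟩ : c = a - 1 ∧ d = b := by omega);
     (obtain ⟨rfl, rfl⟩ : c = a ∧ d = b + 1 := by omega);
     (obtain ⟨rfl, rfl⟩ : c = a ∧ d = b - 1 := by omega)] <;>
  rcases hk with rfl | rfl <;> rcases hl with rfl | rfl <;>
  simp only [show ((1:ℤ) = -1) = False by simp, show ((-1:ℤ) = -1) = True by simp,
    false_and, true_and, if_false, if_true] <;>
  split_ifs <;> omega

lemma wind_corner (γ : LatticeCycle) (x y k l : ℤ) (hk : k = -1 ∨ k = 1)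
    (hl : l = -1 ∨ l = 1) (hv : toR (x, y) ∉ γ.image) :
    wind γ (corner (x, y) k l) = wind γ (toR (x, y)) := by
  have hne : ∀ i ∈ Finset.range γ.n, γ.v i ≠ (x, y) ∧ γ.v (i + 1) ≠ (x, y) := by
    intro i hi
    constructor <;> intro h <;> apply hv <;> apply Set.mem_biUnion hi
    · exact h ▸ left_mem_segment ℝ (toR (γ.v i)) (toR (γ.v (i + 1)))
    · exact h ▸ right_mem_segment ℝ (toR (γ.v i)) (toR (γ.v (i + 1)))
  have hdiff : wind γ (corner (x, y) k l) - wind γ (toR (x, y)) =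
      ∑ i ∈ Finset.range γ.n, (Fk x y k l (γ.v (i + 1)) - Fk x y k l (γ.v i)) := by
    rw [wind, wind, ← Finset.sum_sub_distrib]
    refine Finset.sum_congr rfl fun i hi => ?_
    have hs := γ.step i
    have : γ.v (i + 1) - γ.v i = (1, 0) ∨ γ.v (i + 1) - γ.v i = (-1, 0) ∨
        γ.v (i + 1) - γ.v i = (0, 1) ∨ γ.v (i + 1) - γ.v i = (0, -1) := hs
    exact vcross_key x y k l hk hl _ _ this (hne i hi).1 (hne i hi).2
  rw [Finset.sum_range_sub (fun i => Fk x y k l (γ.v i))] at hdiff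
  have hper : γ.v γ.n = γ.v 0 := by simpa using γ.periodic 0
  rw [hper] at hdiff
  omega

/-- If `v ∈ ℤ²` is not in the image of `γ`, then all four points of
`N_v` have the same winding number as `v`; consequently
`metricw(γ,v) = topw(γ,v) = wind(γ,v)`. -/
theorem wind_corner_eq_of_not_mem (γ : LatticeCycle) (v : ℤ × ℤ)
    (hv : toR v ∉ γ.image) :
    (∀ k l : ℤ, (k = -1 ∨ k = 1) → (l = -1 ∨ l = 1) →
      wind γ (corner v k l) = wind γ (toR v)) ∧
    metricw γ v = (wind γ (toR v) : ℚ) ∧ topw γ v = (wind γ (toR v) : ℚ) := by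
  obtain ⟨x, y⟩ := v
  have hc : ∀ k l : ℤ, (k = -1 ∨ k = 1) → (l = -1 ∨ l = 1) →
      wind γ (corner (x, y) k l) = wind γ (toR (x, y)) := fun k l hk hl =>
    wind_corner γ x y k l hk hl hv
  have h1 := hc (-1) (-1) (Or.inl rfl) (Or.inl rfl)
  have h2 := hc (-1) 1 (Or.inl rfl) (Or.inr rfl)
  have h3 := hc 1 (-1) (Or.inr rfl) (Or.inl rfl)
  have h4 := hc 1 1 (Or.inr rfl) (Or.inr rfl)
  refine ⟨hc, ?_, ?_⟩
  · rw [metricw, h1, h2, h3, h4]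
    push_cast
    ring
  · rw [topw]
    have hws : windSet γ (x, y) = {wind γ (toR (x, y))} := by
      simp [windSet, h1, h2, h3, h4]
    rw [hws]
    simp
end

section
/- Let γ be an oriented simple lattice cycle and let v be a vertex of γ at which γ turns right, i.e. angle(γ,v) = −1/4. Then there exists k ∈ ℤ such that exactly three of the four points of N_v have winding number k+1 and the remaining one has winding number k; consequently topw(γ,v) = k + 1/2, metricw(γ,v) = k + 3/4, and topw(γ,v) − metricw(γ,v) = −1/4. -/
open scoped Classical

lemma half_lt_cast (x a : ℤ) : (x : ℝ) + 1/2 < (a : ℝ) ↔ x < a := by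
  constructor
  · intro h
    have : (x : ℝ) < a := by linarith
    exact_mod_cast this
  · intro h
    have h' : x + 1 ≤ a := by omega
    have : (x : ℝ) + 1 ≤ a := by exact_mod_cast h'
    linarith

lemma band_iff (c b : ℤ) :
    ((c : ℝ) ≤ (b : ℝ) + 1/2 ∧ (b : ℝ) + 1/2 < (c : ℝ) + 1) ↔ c = b := by
  constructor
  · rintro ⟨h1, h2⟩
    have hcb : c ≤ b := by
      by_contra hh
      have h3 : b + 1 ≤ c := by omega
      have : (b : ℝ) + 1 ≤ c := by exact_mod_cast h3
      linarith
    have hbc : b ≤ c := by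
      by_contra hh
      have h3 : c + 1 ≤ b := by omega
      have : (c : ℝ) + 1 ≤ b := by exact_mod_cast h3
      linarith
    omega
  · rintro rfl
    norm_num

lemma vcross_halfpos (u w : ℤ × ℤ) (x b : ℤ) :
    vcross u w ((x : ℝ) + 1/2, (b : ℝ) + 1/2) =
      if w = (u.1, u.2 + 1) ∧ x < u.1 ∧ u.2 = b then 1
      else if u = (w.1, w.2 + 1) ∧ x < w.1 ∧ w.2 = b then -1 else 0 := by
  unfold vcross
  simp only [half_lt_cast, band_iff]

lemma vcross_sub_h (u w : ℤ × ℤ) (x b : ℤ) :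
    vcross u w (((x - 1 : ℤ) : ℝ) + 1/2, (b : ℝ) + 1/2)
      - vcross u w ((x : ℝ) + 1/2, (b : ℝ) + 1/2) =
      if u = (x, b) ∧ w = (x, b + 1) then 1
      else if u = (x, b + 1) ∧ w = (x, b) then -1 else 0 := by
  rw [vcross_halfpos, vcross_halfpos]
  obtain ⟨u1, u2⟩ := u; obtain ⟨w1, w2⟩ := w
  simp only [Prod.mk.injEq]
  split_ifs <;> omega

lemma vcross_sub_v (u w : ℤ × ℤ) (x b : ℤ)
    (hs : w - u = (1, 0) ∨ w - u = (-1, 0) ∨ w - u = (0, 1) ∨ w - u = (0, -1)) :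
    vcross u w ((x : ℝ) + 1/2, (b : ℝ) + 1/2)
      - vcross u w ((x : ℝ) + 1/2, ((b - 1 : ℤ) : ℝ) + 1/2) =
      (if u = (x, b) ∧ w = (x + 1, b) then 1
       else if u = (x + 1, b) ∧ w = (x, b) then -1 else 0)
      + ((if u.2 = b ∧ x < u.1 then (1 : ℤ) else 0)
         - (if w.2 = b ∧ x < w.1 then 1 else 0)) := by
  rw [vcross_halfpos, vcross_halfpos]
  obtain ⟨u1, u2⟩ := u; obtain ⟨w1, w2⟩ := w
  simp only [Prod.mk.injEq, Prod.mk_sub_mk] at hs ⊢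
  rcases hs with h | h | h | h <;> split_ifs <;> omega
noncomputable def Wf (γ : LatticeCycle) (x y : ℤ) : ℤ :=
  wind γ ((x : ℝ) + 1/2, (y : ℝ) + 1/2)

noncomputable def vindF (γ : LatticeCycle) (x b : ℤ) (j : ℕ) : ℤ :=
  if γ.v j = (x, b) ∧ γ.v (j + 1) = (x, b + 1) then 1
  else if γ.v j = (x, b + 1) ∧ γ.v (j + 1) = (x, b) then -1 else 0

noncomputable def hindF (γ : LatticeCycle) (x b : ℤ) (j : ℕ) : ℤ :=
  if γ.v j = (x, b) ∧ γ.v (j + 1) = (x + 1, b) then 1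
  else if γ.v j = (x + 1, b) ∧ γ.v (j + 1) = (x, b) then -1 else 0

lemma windH (γ : LatticeCycle) (x b : ℤ) :
    Wf γ (x - 1) b = Wf γ x b + ∑ j ∈ Finset.range γ.n, vindF γ x b j := by
  unfold Wf wind
  rw [← Finset.sum_add_distrib]
  refine Finset.sum_congr rfl fun j _ => ?_
  have h := vcross_sub_h (γ.v j) (γ.v (j + 1)) x b
  unfold vindF
  linarith

lemma windV (γ : LatticeCycle) (x b : ℤ) :
    Wf γ x b = Wf γ x (b - 1) + ∑ j ∈ Finset.range γ.n, hindF γ x b j := by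
  classical
  set φ : ℕ → ℤ := fun m => if (γ.v m).2 = b ∧ x < (γ.v m).1 then 1 else 0 with hφ
  have key : ∀ j ∈ Finset.range γ.n,
      vcross (γ.v j) (γ.v (j + 1)) ((x : ℝ) + 1/2, (b : ℝ) + 1/2)
        = (vcross (γ.v j) (γ.v (j + 1)) ((x : ℝ) + 1/2, ((b - 1 : ℤ) : ℝ) + 1/2)
            + hindF γ x b j) + (φ j - φ (j + 1)) := by
    intro j _
    have h := vcross_sub_v (γ.v j) (γ.v (j + 1)) x b (γ.step j)
    simp only [hφ]
    unfold hindF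
    linarith
  unfold Wf wind
  rw [Finset.sum_congr rfl key, Finset.sum_add_distrib, Finset.sum_add_distrib,
      Finset.sum_range_sub' φ]
  have hper : γ.v γ.n = γ.v 0 := by simpa using γ.periodic 0
  have hφ0 : φ γ.n = φ 0 := by simp only [hφ, hper]
  linarith

lemma sum_two (n : ℕ) (f : ℕ → ℤ) (i ip : ℕ) (hi : i < n) (hip : ip < n) (hne : i ≠ ip)
    (h0 : ∀ j, j < n → j ≠ i → j ≠ ip → f j = 0) :
    ∑ j ∈ Finset.range n, f j = f i + f ip := by
  rw [← Finset.sum_pair hne]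
  refine (Finset.sum_subset ?_ ?_).symm
  · intro j hj
    rw [Finset.mem_insert, Finset.mem_singleton] at hj
    rw [Finset.mem_range]
    rcases hj with rfl | rfl
    · exact hi
    · exact hip
  · intro j hj hnot
    simp only [Finset.mem_insert, Finset.mem_singleton, not_or] at hnot
    exact h0 j (Finset.mem_range.mp hj) hnot.1 hnot.2

lemma cornerSW (γ : LatticeCycle) (x y : ℤ) :
    wind γ (corner (x, y) (-1) (-1)) = Wf γ (x - 1) (y - 1) := by
  unfold Wf
  congr 1
  unfold corner
  simp only [Prod.mk.injEq]
  constructor <;> (push_cast; ring)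

lemma cornerNW (γ : LatticeCycle) (x y : ℤ) :
    wind γ (corner (x, y) (-1) 1) = Wf γ (x - 1) y := by
  unfold Wf
  congr 1
  unfold corner
  simp only [Prod.mk.injEq]
  constructor <;> (push_cast; ring)

lemma cornerSE (γ : LatticeCycle) (x y : ℤ) :
    wind γ (corner (x, y) 1 (-1)) = Wf γ x (y - 1) := by
  unfold Wf
  congr 1
  unfold corner
  simp only [Prod.mk.injEq]
  constructor <;> (push_cast; ring)

lemma cornerNE (γ : LatticeCycle) (x y : ℤ) :
    wind γ (corner (x, y) 1 1) = Wf γ x y := by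
  unfold Wf
  congr 1
  unfold corner
  simp only [Prod.mk.injEq]
  constructor <;> (push_cast; ring)

lemma msA (a b : ℤ) : ({b, b, a, b} : Multiset ℤ) = {a, b, b, b} := by
  simp only [Multiset.insert_eq_cons]
  rw [Multiset.cons_swap b a, Multiset.cons_swap b a]

lemma msB (a b : ℤ) : ({b, a, b, b} : Multiset ℤ) = {a, b, b, b} := by
  simp only [Multiset.insert_eq_cons]
  rw [Multiset.cons_swap b a]

lemma msC (a b : ℤ) : ({b, b, b, a} : Multiset ℤ) = {a, b, b, b} := by
  simp only [Multiset.insert_eq_cons, ← Multiset.cons_zero]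
  rw [Multiset.cons_swap b a, Multiset.cons_swap b a, Multiset.cons_swap b a]

lemma helper (γ : LatticeCycle) (v : ℤ × ℤ) (k : ℤ)
    (h : ({wind γ (corner v (-1) (-1)), wind γ (corner v (-1) 1),
        wind γ (corner v 1 (-1)), wind γ (corner v 1 1)} : Multiset ℤ) =
        ({k, k + 1, k + 1, k + 1} : Multiset ℤ)) :
    topw γ v = (k : ℚ) + 1/2 ∧ metricw γ v = (k : ℚ) + 3/4 ∧
      topw γ v - metricw γ v = -(1/4) := by
  have hsum : wind γ (corner v (-1) (-1)) + wind γ (corner v (-1) 1) +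
      wind γ (corner v 1 (-1)) + wind γ (corner v 1 1) = 4 * k + 3 := by
    have h2 := congrArg Multiset.sum h
    simp only [Multiset.insert_eq_cons, Multiset.sum_cons, Multiset.sum_singleton] at h2
    linarith
  have hset : windSet γ v = ({k, k + 1} : Finset ℤ) := by
    ext a
    have hm : (a ∈ ({wind γ (corner v (-1) (-1)), wind γ (corner v (-1) 1),
        wind γ (corner v 1 (-1)), wind γ (corner v 1 1)} : Multiset ℤ)) ↔
        a ∈ ({k, k + 1, k + 1, k + 1} : Multiset ℤ) := by rw [h]
    simp only [Multiset.insert_eq_cons, Multiset.mem_cons, Multiset.mem_singleton] at hm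
    simp only [windSet, Finset.mem_insert, Finset.mem_singleton]
    tauto
  have hcard : (windSet γ v).card = 2 := by
    rw [hset]
    exact Finset.card_pair (by omega)
  have hs2 : ∑ m ∈ windSet γ v, (m : ℚ) = (k : ℚ) + ((k : ℚ) + 1) := by
    rw [hset, Finset.sum_pair (by omega : k ≠ k + 1)]
    push_cast
    ring
  have ht : topw γ v = (k : ℚ) + 1/2 := by
    unfold topw
    rw [hs2, hcard]
    push_cast
    ring
  have hmw : metricw γ v = (k : ℚ) + 3/4 := by
    unfold metricw
    rw [hsum]
    push_cast
    ring
  exact ⟨ht, hmw, by rw [ht, hmw]; ring⟩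
/-- At a vertex `v = vᵢ` of `γ` where `γ` turns right
(`d_out` is `d_in` rotated by 90° clockwise), there is `k ∈ ℤ` such that exactly
three of the four points of `N_v` have winding number `k+1` and the remaining
one has winding number `k`; consequently `topw(γ,v) = k + 1/2`,
`metricw(γ,v) = k + 3/4` and `topw(γ,v) - metricw(γ,v) = -1/4`. -/
theorem weights_at_right_turn_vertex (γ : LatticeCycle) (v : ℤ × ℤ) (i : ℕ)
    (hi : i < γ.n) (hvi : γ.v i = v)
    (hright : γ.v (i + 1) - γ.v i =
      ((γ.v (i + γ.n) - γ.v (i + γ.n - 1)).2, -(γ.v (i + γ.n) - γ.v (i + γ.n - 1)).1)) :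
    ∃ k : ℤ,
      ({wind γ (corner v (-1) (-1)), wind γ (corner v (-1) 1),
        wind γ (corner v 1 (-1)), wind γ (corner v 1 1)} : Multiset ℤ) =
        ({k, k + 1, k + 1, k + 1} : Multiset ℤ) ∧
      topw γ v = (k : ℚ) + 1/2 ∧ metricw γ v = (k : ℚ) + 3/4 ∧
      topw γ v - metricw γ v = -(1/4) := by
  obtain ⟨x, y⟩ := v
  have h4 : 4 ≤ γ.n := γ.four_le
  set ip : ℕ := if i = 0 then γ.n - 1 else i - 1 with hip_def
  have hip_lt : ip < γ.n := by rw [hip_def]; split <;> omega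
  have hne : i ≠ ip := by rw [hip_def]; split <;> omega
  set d : ℤ × ℤ := γ.v (i + γ.n) - γ.v (i + γ.n - 1) with hd
  have hvin : γ.v (i + γ.n) = (x, y) := by rw [γ.periodic i, hvi]
  have hprev : γ.v (i + γ.n - 1) = γ.v ip := by
    rw [hip_def]
    by_cases h0 : i = 0
    · simp [h0]
    · rw [if_neg h0]
      have he : i + γ.n - 1 = (i - 1) + γ.n := by omega
      rw [he, γ.periodic]
  have hvip : γ.v ip = (x, y) - d := by
    rw [hd, hvin, hprev, sub_sub_cancel]
  have hvips : γ.v (ip + 1) = (x, y) := by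
    rw [hip_def]
    by_cases h0 : i = 0
    · rw [if_pos h0]
      have h1 : γ.n - 1 + 1 = 0 + γ.n := by omega
      rw [h1, γ.periodic, ← h0, hvi]
    · rw [if_neg h0]
      have h1 : i - 1 + 1 = i := by omega
      rw [h1, hvi]
  have hdunit : d = (1, 0) ∨ d = (-1, 0) ∨ d = (0, 1) ∨ d = (0, -1) := by
    have hs := γ.step ip
    rw [hvips, hvip, sub_sub_cancel] at hs
    exact hs
  have hvi1 : γ.v (i + 1) = (x, y) + (d.2, -d.1) := by
    have h := hright
    rw [hvi, sub_eq_iff_eq_add] at h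
    rw [h, add_comm]
  have hinc : ∀ j, j < γ.n → (γ.v j = (x, y) ∨ γ.v (j + 1) = (x, y)) → j = i ∨ j = ip := by
    intro j hj hor
    rcases hor with h | h
    · exact Or.inl (γ.inj j i hj hi (h.trans hvi.symm))
    · by_cases hj1 : j + 1 < γ.n
      · have hji : j + 1 = i := γ.inj (j + 1) i hj1 hi (h.trans hvi.symm)
        right; rw [hip_def, if_neg (by omega)]; omega
      · have hjn : j + 1 = γ.n := by omega
        have hvn : γ.v γ.n = γ.v 0 := by simpa using γ.periodic 0
        have h0 : γ.v 0 = (x, y) := by rw [← hvn, ← hjn]; exact h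
        have hi0 : (0 : ℕ) = i := γ.inj 0 i (by omega) hi (h0.trans hvi.symm)
        right; rw [hip_def, if_pos hi0.symm]; omega
  -- the four difference equations
  have van1 : ∀ j, j < γ.n → j ≠ i → j ≠ ip → vindF γ x y j = 0 := by
    intro j hj hji hjip
    by_contra hne0
    have hor : γ.v j = (x, y) ∨ γ.v (j + 1) = (x, y) := by
      unfold vindF at hne0
      split_ifs at hne0 with h1 h2
      · exact Or.inl h1.1
      · exact Or.inr h2.2
      · exact absurd rfl hne0
    rcases hinc j hj hor with rfl | rfl
    · exact hji rfl
    · exact hjip rfl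
  have van2 : ∀ j, j < γ.n → j ≠ i → j ≠ ip → vindF γ x (y - 1) j = 0 := by
    intro j hj hji hjip
    by_contra hne0
    have hor : γ.v j = (x, y) ∨ γ.v (j + 1) = (x, y) := by
      unfold vindF at hne0
      split_ifs at hne0 with h1 h2
      · exact Or.inr (by rw [h1.2, sub_add_cancel])
      · exact Or.inl (by rw [h2.1, sub_add_cancel])
      · exact absurd rfl hne0
    rcases hinc j hj hor with rfl | rfl
    · exact hji rfl
    · exact hjip rfl
  have van3 : ∀ j, j < γ.n → j ≠ i → j ≠ ip → hindF γ x y j = 0 := by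
    intro j hj hji hjip
    by_contra hne0
    have hor : γ.v j = (x, y) ∨ γ.v (j + 1) = (x, y) := by
      unfold hindF at hne0
      split_ifs at hne0 with h1 h2
      · exact Or.inl h1.1
      · exact Or.inr h2.2
      · exact absurd rfl hne0
    rcases hinc j hj hor with rfl | rfl
    · exact hji rfl
    · exact hjip rfl
  have van4 : ∀ j, j < γ.n → j ≠ i → j ≠ ip → hindF γ (x - 1) y j = 0 := by
    intro j hj hji hjip
    by_contra hne0
    have hor : γ.v j = (x, y) ∨ γ.v (j + 1) = (x, y) := by
      unfold hindF at hne0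
      split_ifs at hne0 with h1 h2
      · exact Or.inr (by rw [h1.2, sub_add_cancel])
      · exact Or.inl (by rw [h2.1, sub_add_cancel])
      · exact absurd rfl hne0
    rcases hinc j hj hor with rfl | rfl
    · exact hji rfl
    · exact hjip rfl
  have hEA1 : Wf γ (x - 1) y = Wf γ x y + (vindF γ x y i + vindF γ x y ip) := by
    rw [windH, sum_two γ.n _ i ip hi hip_lt hne van1]
  have hEA2 : Wf γ (x - 1) (y - 1) =
      Wf γ x (y - 1) + (vindF γ x (y - 1) i + vindF γ x (y - 1) ip) := by
    rw [windH, sum_two γ.n _ i ip hi hip_lt hne van2]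
  have hEB1 : Wf γ x y = Wf γ x (y - 1) + (hindF γ x y i + hindF γ x y ip) := by
    rw [windV, sum_two γ.n _ i ip hi hip_lt hne van3]
  have hEB2 : Wf γ (x - 1) y =
      Wf γ (x - 1) (y - 1) + (hindF γ (x - 1) y i + hindF γ (x - 1) y ip) := by
    rw [windV, sum_two γ.n _ i ip hi hip_lt hne van4]
  rcases hdunit with h | h | h | h
  · -- d = (1,0): dout = (0,-1)
    have hv1 : γ.v (i + 1) = (x, y - 1) := by
      rw [hvi1, h]; simp [Prod.ext_iff, ← sub_eq_add_neg, sub_neg_eq_add]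
    have hvp : γ.v ip = (x - 1, y) := by
      rw [hvip, h]; simp [Prod.ext_iff, ← sub_eq_add_neg, sub_neg_eq_add]
    have S1 : vindF γ x y i + vindF γ x y ip = 0 := by
      unfold vindF
      simp only [hvi, hv1, hvp, hvips, Prod.mk.injEq, true_and, and_true]
      all_goals ((try split_ifs) <;> omega)
    have S2 : vindF γ x (y - 1) i + vindF γ x (y - 1) ip = -1 := by
      unfold vindF
      simp only [hvi, hv1, hvp, hvips, Prod.mk.injEq, true_and, and_true]
      all_goals ((try split_ifs) <;> omega)
    have S3 : hindF γ x y i + hindF γ x y ip = 0 := by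
      unfold hindF
      simp only [hvi, hv1, hvp, hvips, Prod.mk.injEq, true_and, and_true]
      all_goals ((try split_ifs) <;> omega)
    have S4 : hindF γ (x - 1) y i + hindF γ (x - 1) y ip = 1 := by
      unfold hindF
      simp only [hvi, hv1, hvp, hvips, Prod.mk.injEq, true_and, and_true]
      all_goals ((try split_ifs) <;> omega)
    rw [S1] at hEA1; rw [S2] at hEA2; rw [S3] at hEB1; rw [S4] at hEB2
    refine ⟨Wf γ (x - 1) (y - 1), ?_⟩
    have hms : ({wind γ (corner (x, y) (-1) (-1)), wind γ (corner (x, y) (-1) 1),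
        wind γ (corner (x, y) 1 (-1)), wind γ (corner (x, y) 1 1)} : Multiset ℤ) =
        ({Wf γ (x - 1) (y - 1), Wf γ (x - 1) (y - 1) + 1, Wf γ (x - 1) (y - 1) + 1,
          Wf γ (x - 1) (y - 1) + 1} : Multiset ℤ) := by
      rw [cornerSW, cornerNW, cornerSE, cornerNE,
        (by linarith : Wf γ (x - 1) y = Wf γ (x - 1) (y - 1) + 1),
        (by linarith : Wf γ x (y - 1) = Wf γ (x - 1) (y - 1) + 1),
        (by linarith : Wf γ x y = Wf γ (x - 1) (y - 1) + 1)]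
    exact ⟨hms, (helper γ (x, y) _ hms).1, (helper γ (x, y) _ hms).2.1,
      (helper γ (x, y) _ hms).2.2⟩
  · -- d = (-1,0): dout = (0,1)
    have hv1 : γ.v (i + 1) = (x, y + 1) := by
      rw [hvi1, h]; simp [Prod.ext_iff, ← sub_eq_add_neg, sub_neg_eq_add]
    have hvp : γ.v ip = (x + 1, y) := by
      rw [hvip, h]; simp [Prod.ext_iff, ← sub_eq_add_neg, sub_neg_eq_add]
    have S1 : vindF γ x y i + vindF γ x y ip = 1 := by
      unfold vindF
      simp only [hvi, hv1, hvp, hvips, Prod.mk.injEq, true_and, and_true]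
      all_goals ((try split_ifs) <;> omega)
    have S2 : vindF γ x (y - 1) i + vindF γ x (y - 1) ip = 0 := by
      unfold vindF
      simp only [hvi, hv1, hvp, hvips, Prod.mk.injEq, true_and, and_true]
      all_goals ((try split_ifs) <;> omega)
    have S3 : hindF γ x y i + hindF γ x y ip = -1 := by
      unfold hindF
      simp only [hvi, hv1, hvp, hvips, Prod.mk.injEq, true_and, and_true]
      all_goals ((try split_ifs) <;> omega)
    have S4 : hindF γ (x - 1) y i + hindF γ (x - 1) y ip = 0 := by
      unfold hindF
      simp only [hvi, hv1, hvp, hvips, Prod.mk.injEq, true_and, and_true]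
      all_goals ((try split_ifs) <;> omega)
    rw [S1] at hEA1; rw [S2] at hEA2; rw [S3] at hEB1; rw [S4] at hEB2
    refine ⟨Wf γ x y, ?_⟩
    have hms : ({wind γ (corner (x, y) (-1) (-1)), wind γ (corner (x, y) (-1) 1),
        wind γ (corner (x, y) 1 (-1)), wind γ (corner (x, y) 1 1)} : Multiset ℤ) =
        ({Wf γ x y, Wf γ x y + 1, Wf γ x y + 1, Wf γ x y + 1} : Multiset ℤ) := by
      rw [cornerSW, cornerNW, cornerSE, cornerNE,
        (by linarith : Wf γ (x - 1) (y - 1) = Wf γ x y + 1),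
        (by linarith : Wf γ (x - 1) y = Wf γ x y + 1),
        (by linarith : Wf γ x (y - 1) = Wf γ x y + 1)]
      exact msC _ _
    exact ⟨hms, (helper γ (x, y) _ hms).1, (helper γ (x, y) _ hms).2.1,
      (helper γ (x, y) _ hms).2.2⟩
  · -- d = (0,1): dout = (1,0)
    have hv1 : γ.v (i + 1) = (x + 1, y) := by
      rw [hvi1, h]; simp [Prod.ext_iff, ← sub_eq_add_neg, sub_neg_eq_add]
    have hvp : γ.v ip = (x, y - 1) := by
      rw [hvip, h]; simp [Prod.ext_iff, ← sub_eq_add_neg, sub_neg_eq_add]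
    have S1 : vindF γ x y i + vindF γ x y ip = 0 := by
      unfold vindF
      simp only [hvi, hv1, hvp, hvips, Prod.mk.injEq, true_and, and_true]
      all_goals ((try split_ifs) <;> omega)
    have S2 : vindF γ x (y - 1) i + vindF γ x (y - 1) ip = 1 := by
      unfold vindF
      simp only [hvi, hv1, hvp, hvips, Prod.mk.injEq, true_and, and_true]
      all_goals ((try split_ifs) <;> omega)
    have S3 : hindF γ x y i + hindF γ x y ip = 1 := by
      unfold hindF
      simp only [hvi, hv1, hvp, hvips, Prod.mk.injEq, true_and, and_true]
      all_goals ((try split_ifs) <;> omega)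
    have S4 : hindF γ (x - 1) y i + hindF γ (x - 1) y ip = 0 := by
      unfold hindF
      simp only [hvi, hv1, hvp, hvips, Prod.mk.injEq, true_and, and_true]
      all_goals ((try split_ifs) <;> omega)
    rw [S1] at hEA1; rw [S2] at hEA2; rw [S3] at hEB1; rw [S4] at hEB2
    refine ⟨Wf γ x (y - 1), ?_⟩
    have hms : ({wind γ (corner (x, y) (-1) (-1)), wind γ (corner (x, y) (-1) 1),
        wind γ (corner (x, y) 1 (-1)), wind γ (corner (x, y) 1 1)} : Multiset ℤ) =
        ({Wf γ x (y - 1), Wf γ x (y - 1) + 1, Wf γ x (y - 1) + 1,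
          Wf γ x (y - 1) + 1} : Multiset ℤ) := by
      rw [cornerSW, cornerNW, cornerSE, cornerNE,
        (by linarith : Wf γ (x - 1) (y - 1) = Wf γ x (y - 1) + 1),
        (by linarith : Wf γ (x - 1) y = Wf γ x (y - 1) + 1),
        (by linarith : Wf γ x y = Wf γ x (y - 1) + 1)]
      exact msA _ _
    exact ⟨hms, (helper γ (x, y) _ hms).1, (helper γ (x, y) _ hms).2.1,
      (helper γ (x, y) _ hms).2.2⟩
  · -- d = (0,-1): dout = (-1,0)
    have hv1 : γ.v (i + 1) = (x - 1, y) := by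
      rw [hvi1, h]; simp [Prod.ext_iff, ← sub_eq_add_neg, sub_neg_eq_add]
    have hvp : γ.v ip = (x, y + 1) := by
      rw [hvip, h]; simp [Prod.ext_iff, ← sub_eq_add_neg, sub_neg_eq_add]
    have S1 : vindF γ x y i + vindF γ x y ip = -1 := by
      unfold vindF
      simp only [hvi, hv1, hvp, hvips, Prod.mk.injEq, true_and, and_true]
      all_goals ((try split_ifs) <;> omega)
    have S2 : vindF γ x (y - 1) i + vindF γ x (y - 1) ip = 0 := by
      unfold vindF
      simp only [hvi, hv1, hvp, hvips, Prod.mk.injEq, true_and, and_true]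
      all_goals ((try split_ifs) <;> omega)
    have S3 : hindF γ x y i + hindF γ x y ip = 0 := by
      unfold hindF
      simp only [hvi, hv1, hvp, hvips, Prod.mk.injEq, true_and, and_true]
      all_goals ((try split_ifs) <;> omega)
    have S4 : hindF γ (x - 1) y i + hindF γ (x - 1) y ip = -1 := by
      unfold hindF
      simp only [hvi, hv1, hvp, hvips, Prod.mk.injEq, true_and, and_true]
      all_goals ((try split_ifs) <;> omega)
    rw [S1] at hEA1; rw [S2] at hEA2; rw [S3] at hEB1; rw [S4] at hEB2
    refine ⟨Wf γ (x - 1) y, ?_⟩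
    have hms : ({wind γ (corner (x, y) (-1) (-1)), wind γ (corner (x, y) (-1) 1),
        wind γ (corner (x, y) 1 (-1)), wind γ (corner (x, y) 1 1)} : Multiset ℤ) =
        ({Wf γ (x - 1) y, Wf γ (x - 1) y + 1, Wf γ (x - 1) y + 1,
          Wf γ (x - 1) y + 1} : Multiset ℤ) := by
      rw [cornerSW, cornerNW, cornerSE, cornerNE,
        (by linarith : Wf γ (x - 1) (y - 1) = Wf γ (x - 1) y + 1),
        (by linarith : Wf γ x (y - 1) = Wf γ (x - 1) y + 1),
        (by linarith : Wf γ x y = Wf γ (x - 1) y + 1)]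
      exact msB _ _
    exact ⟨hms, (helper γ (x, y) _ hms).1, (helper γ (x, y) _ hms).2.1,
      (helper γ (x, y) _ hms).2.2⟩
end

section
/- (Lemma 3.3 of the paper.) Let γ be an oriented simple lattice cycle and let v ∈ ℤ². Then topw(γ,v) − metricw(γ,v) = angle(γ,v) if v is a vertex of γ, and topw(γ,v) − metricw(γ,v) = 0 otherwise. -/
open scoped Classical

-- integer version of vcross at a corner point
def ivc (u w v : ℤ × ℤ) (k l : ℤ) : ℤ :=
  if w = (u.1, u.2 + 1) ∧ 2*v.1 + k < 2*u.1 ∧ 2*u.2 ≤ 2*v.2 + l ∧ 2*v.2 + l < 2*u.2 + 2 then 1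
  else if u = (w.1, w.2 + 1) ∧ 2*v.1 + k < 2*w.1 ∧ 2*w.2 ≤ 2*v.2 + l ∧ 2*v.2 + l < 2*w.2 + 2 then -1
  else 0

lemma half_lt (a k b : ℤ) : ((a:ℝ) + (k:ℝ)/2 < (b:ℝ)) ↔ 2*a + k < 2*b := by
  constructor <;> intro h
  · exact_mod_cast show ((2*a+k:ℤ):ℝ) < ((2*b:ℤ):ℝ) by push_cast; linarith
  · have h2 : ((2*a+k:ℤ):ℝ) < ((2*b:ℤ):ℝ) := by exact_mod_cast h
    push_cast at h2; linarith

lemma le_half (a b l : ℤ) : ((a:ℝ) ≤ (b:ℝ) + (l:ℝ)/2) ↔ 2*a ≤ 2*b + l := by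
  constructor <;> intro h
  · exact_mod_cast show ((2*a:ℤ):ℝ) ≤ ((2*b+l:ℤ):ℝ) by push_cast; linarith
  · have h2 : ((2*a:ℤ):ℝ) ≤ ((2*b+l:ℤ):ℝ) := by exact_mod_cast h
    push_cast at h2; linarith

lemma half_lt' (b l a : ℤ) : ((b:ℝ) + (l:ℝ)/2 < (a:ℝ) + 1) ↔ 2*b + l < 2*a + 2 := by
  constructor <;> intro h
  · exact_mod_cast show ((2*b+l:ℤ):ℝ) < ((2*a+2:ℤ):ℝ) by push_cast; linarith
  · have h2 : ((2*b+l:ℤ):ℝ) < ((2*a+2:ℤ):ℝ) := by exact_mod_cast h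
    push_cast at h2; linarith

lemma vcross_corner_s6 (u w v : ℤ × ℤ) (k l : ℤ) :
    vcross u w (corner v k l) = ivc u w v k l := by
  unfold vcross ivc corner
  simp only [half_lt, le_half, half_lt']

-- signed indicator: directed vertical edge of the cycle adjacent to v (below for l=-1, above for l=1)
def tv (u w v : ℤ × ℤ) (l : ℤ) : ℤ :=
  if w = (u.1, u.2 + 1) ∧ u.1 = v.1 ∧ 2*u.2 ≤ 2*v.2 + l ∧ 2*v.2 + l < 2*u.2 + 2 then 1
  else if u = (w.1, w.2 + 1) ∧ w.1 = v.1 ∧ 2*w.2 ≤ 2*v.2 + l ∧ 2*v.2 + l < 2*w.2 + 2 then -1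
  else 0

-- signed indicator: directed horizontal edge crossing the vertical line x = v.1 + k/2 at height v.2
def hc (u w v : ℤ × ℤ) (k : ℤ) : ℤ :=
  if w = (u.1 + 1, u.2) ∧ u.2 = v.2 ∧ 2*u.1 < 2*v.1 + k ∧ 2*v.1 + k < 2*u.1 + 2 then 1
  else if u = (w.1 + 1, w.2) ∧ w.2 = v.2 ∧ 2*w.1 < 2*v.1 + k ∧ 2*v.1 + k < 2*w.1 + 2 then -1
  else 0

def gfun (v : ℤ × ℤ) (k : ℤ) (u : ℤ × ℤ) : ℤ :=
  if u.2 = v.2 ∧ 2*v.1 + k < 2*u.1 then 1 else 0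

lemma E1 (u w v : ℤ × ℤ) (l : ℤ) :
    ivc u w v (-1) l - ivc u w v 1 l = tv u w v l := by
  obtain ⟨u1, u2⟩ := u; obtain ⟨w1, w2⟩ := w; obtain ⟨x, y⟩ := v
  unfold ivc tv
  simp only [Prod.mk.injEq]
  split_ifs <;> omega

set_option maxHeartbeats 1000000 in
lemma E2 (u w v : ℤ × ℤ) (k : ℤ) (hk : k = -1 ∨ k = 1)
    (hs : w - u = (1, 0) ∨ w - u = (-1, 0) ∨ w - u = (0, 1) ∨ w - u = (0, -1)) :
    ivc u w v k (-1) - ivc u w v k 1 = (gfun v k w - gfun v k u) - hc u w v k := by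
  obtain ⟨u1, u2⟩ := u; obtain ⟨w1, w2⟩ := w; obtain ⟨x, y⟩ := v
  simp only [Prod.mk_sub_mk, Prod.mk.injEq] at hs
  unfold ivc gfun hc
  simp only [Prod.mk.injEq]
  rcases hs with ⟨h1, h2⟩ | ⟨h1, h2⟩ | ⟨h1, h2⟩ | ⟨h1, h2⟩
  · obtain rfl : w1 = u1 + 1 := by omega
    obtain rfl : w2 = u2 := by omega
    split_ifs <;> omega
  · obtain rfl : w1 = u1 - 1 := by omega
    obtain rfl : w2 = u2 := by omega
    split_ifs <;> omega
  · obtain rfl : w1 = u1 := by omega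
    obtain rfl : w2 = u2 + 1 := by omega
    split_ifs <;> omega
  · obtain rfl : w1 = u1 := by omega
    obtain rfl : w2 = u2 - 1 := by omega
    split_ifs <;> omega

lemma wind_sub_lr (γ : LatticeCycle) (p : ℤ × ℤ) (l : ℤ) :
    wind γ (corner p (-1) l) - wind γ (corner p 1 l) =
      ∑ j ∈ Finset.range γ.n, tv (γ.v j) (γ.v (j + 1)) p l := by
  unfold wind
  rw [← Finset.sum_sub_distrib]
  refine Finset.sum_congr rfl fun j _ => ?_
  rw [vcross_corner_s6, vcross_corner_s6, E1]

lemma wind_sub_ud (γ : LatticeCycle) (p : ℤ × ℤ) (k : ℤ) (hk : k = -1 ∨ k = 1) :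
    wind γ (corner p k (-1)) - wind γ (corner p k 1) =
      - ∑ j ∈ Finset.range γ.n, hc (γ.v j) (γ.v (j + 1)) p k := by
  unfold wind
  rw [← Finset.sum_sub_distrib]
  have h1 : ∀ j ∈ Finset.range γ.n,
      vcross (γ.v j) (γ.v (j+1)) (corner p k (-1)) - vcross (γ.v j) (γ.v (j+1)) (corner p k 1)
      = (gfun p k (γ.v (j+1)) - gfun p k (γ.v j)) - hc (γ.v j) (γ.v (j+1)) p k := by
    intro j _
    rw [vcross_corner_s6, vcross_corner_s6, E2 _ _ _ _ hk (γ.step j)]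
  rw [Finset.sum_congr rfl h1, Finset.sum_sub_distrib,
    Finset.sum_range_sub (fun j => gfun p k (γ.v j))]
  have h0 : γ.v γ.n = γ.v 0 := by have := γ.periodic 0; rwa [zero_add] at this
  rw [h0]
  ring

lemma sum_zero (γ : LatticeCycle) (p : ℤ × ℤ) (F : ℤ × ℤ → ℤ × ℤ → ℤ)
    (hv : ∀ j, j < γ.n → γ.v j ≠ p)
    (hF : ∀ u w, F u w ≠ 0 → u = p ∨ w = p) :
    ∑ j ∈ Finset.range γ.n, F (γ.v j) (γ.v (j + 1)) = 0 := by
  refine Finset.sum_eq_zero fun j hj => ?_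
  rw [Finset.mem_range] at hj
  by_contra hne
  rcases hF _ _ hne with h | h
  · exact hv j hj h
  · rcases Nat.lt_or_ge (j+1) γ.n with h2 | h2
    · exact hv (j+1) h2 h
    · have hj1 : j + 1 = γ.n := by omega
      have h0 : γ.v γ.n = γ.v 0 := by have := γ.periodic 0; rwa [zero_add] at this
      have : γ.v 0 = p := by rw [← h0, ← hj1]; exact h
      exact hv 0 (by omega) this

lemma sum_two_s6 (γ : LatticeCycle) (p : ℤ × ℤ) (F : ℤ × ℤ → ℤ × ℤ → ℤ) (i ip : ℕ)
    (hi : i < γ.n) (hip : ip < γ.n) (hne : ip ≠ i)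
    (hv0 : ∀ j, j < γ.n → γ.v j = p → j = i)
    (hv1 : ∀ j, j < γ.n → γ.v (j + 1) = p → j = ip)
    (hF : ∀ u w, F u w ≠ 0 → u = p ∨ w = p) :
    ∑ j ∈ Finset.range γ.n, F (γ.v j) (γ.v (j + 1)) =
      F (γ.v ip) (γ.v (ip + 1)) + F (γ.v i) (γ.v (i + 1)) := by
  have hsub : ({ip, i} : Finset ℕ) ⊆ Finset.range γ.n := by
    intro j hj
    simp only [Finset.mem_insert, Finset.mem_singleton] at hj
    rcases hj with rfl | rfl <;> simp [Finset.mem_range, hip, hi]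
  have hzero : ∀ j ∈ Finset.range γ.n, j ∉ ({ip, i} : Finset ℕ) →
      F (γ.v j) (γ.v (j + 1)) = 0 := by
    intro j hj hj2
    rw [Finset.mem_range] at hj
    simp only [Finset.mem_insert, Finset.mem_singleton, not_or] at hj2
    by_contra hne'
    rcases hF _ _ hne' with h | h
    · exact hj2.2 (hv0 j hj h)
    · exact hj2.1 (hv1 j hj h)
  rw [← Finset.sum_subset hsub hzero, Finset.sum_pair hne]







lemma tv_ne (u w p : ℤ × ℤ) (l : ℤ) (hl : l = -1 ∨ l = 1) (h : tv u w p l ≠ 0) :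
    u = p ∨ w = p := by
  obtain ⟨u1, u2⟩ := u; obtain ⟨w1, w2⟩ := w; obtain ⟨x, y⟩ := p
  unfold tv at h
  simp only [Prod.mk.injEq] at h ⊢
  split_ifs at h <;> omega

lemma hc_ne (u w p : ℤ × ℤ) (k : ℤ) (hk : k = -1 ∨ k = 1) (h : hc u w p k ≠ 0) :
    u = p ∨ w = p := by
  obtain ⟨u1, u2⟩ := u; obtain ⟨w1, w2⟩ := w; obtain ⟨x, y⟩ := p
  unfold hc at h
  simp only [Prod.mk.injEq] at h ⊢
  split_ifs at h <;> omega

lemma angle_eq (γ : LatticeCycle) (v : ℤ × ℤ) (i : ℕ) (hi : i < γ.n) (hvi : γ.v i = v) :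
    angle γ v = angleAt γ i := by
  have hv : γ.isVertex v := ⟨i, hi, hvi⟩
  rw [angle, dif_pos hv]
  obtain ⟨hj, hje⟩ := hv.choose_spec
  exact congrArg _ (γ.inj _ _ hj hi (hje.trans hvi.symm))

lemma angleAt_eval (γ : LatticeCycle) (i : ℕ) (din dout : ℤ × ℤ)
    (h1 : γ.v (i + γ.n) - γ.v (i + γ.n - 1) = din)
    (h2 : γ.v (i + 1) - γ.v i = dout) :
    angleAt γ i =
      (if dout = din then 0
       else if dout = (-din.2, din.1) then 1/4
       else if dout = (din.2, -din.1) then -1/4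
       else 0 : ℚ) := by
  unfold angleAt
  rw [h1, h2]

lemma eval_eq (γ : LatticeCycle) (p : ℤ × ℤ) (w : ℤ)
    (h : wind γ (corner p (-1) (-1)) + wind γ (corner p (-1) 1) +
      wind γ (corner p 1 (-1)) + wind γ (corner p 1 1) = 4 * w)
    (hset : windSet γ p = {w}) :
    topw γ p - metricw γ p = 0 := by
  unfold topw metricw
  rw [hset, h, Finset.sum_singleton, Finset.card_singleton]
  push_cast
  ring

lemma eval_mixed (γ : LatticeCycle) (p : ℤ × ℤ) (w s : ℤ)
    (h : wind γ (corner p (-1) (-1)) + wind γ (corner p (-1) 1) +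
      wind γ (corner p 1 (-1)) + wind γ (corner p 1 1) = 4 * w + s)
    (hset : windSet γ p = {w, w + 1}) :
    topw γ p - metricw γ p = (2 - s) / 4 := by
  unfold topw metricw
  rw [hset, h, Finset.sum_pair (by omega : w ≠ w + 1), Finset.card_pair (by omega : w ≠ w + 1)]
  push_cast
  ring
lemma din_R (p : ℤ × ℤ) (x y : ℤ) (h : (x, y) - p = (1, 0)) : p = (x - 1, y) := by
  obtain ⟨p1, p2⟩ := p; simp only [Prod.mk_sub_mk, Prod.mk.injEq] at h ⊢; omega

lemma dout_R (p : ℤ × ℤ) (x y : ℤ) (h : p - (x, y) = (1, 0)) : p = (x + 1, y) := by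
  obtain ⟨p1, p2⟩ := p; simp only [Prod.mk_sub_mk, Prod.mk.injEq] at h ⊢; omega

lemma tvm_in_R (x y : ℤ) : tv (x - 1, y) (x, y) (x, y) (-1) = 0 := by
  unfold tv
  dsimp only
  simp only [Prod.mk.injEq]
  split_ifs <;> omega

lemma tvm_out_R (x y : ℤ) : tv (x, y) (x + 1, y) (x, y) (-1) = 0 := by
  unfold tv
  dsimp only
  simp only [Prod.mk.injEq]
  split_ifs <;> omega

lemma tvp_in_R (x y : ℤ) : tv (x - 1, y) (x, y) (x, y) 1 = 0 := by
  unfold tv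
  dsimp only
  simp only [Prod.mk.injEq]
  split_ifs <;> omega

lemma tvp_out_R (x y : ℤ) : tv (x, y) (x + 1, y) (x, y) 1 = 0 := by
  unfold tv
  dsimp only
  simp only [Prod.mk.injEq]
  split_ifs <;> omega

lemma hcm_in_R (x y : ℤ) : hc (x - 1, y) (x, y) (x, y) (-1) = 1 := by
  unfold hc
  dsimp only
  simp only [Prod.mk.injEq]
  split_ifs <;> (try simp_all only [true_and, and_true]) <;> omega

lemma hcm_out_R (x y : ℤ) : hc (x, y) (x + 1, y) (x, y) (-1) = 0 := by
  unfold hc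
  dsimp only
  simp only [Prod.mk.injEq]
  split_ifs <;> omega

lemma hcp_in_R (x y : ℤ) : hc (x - 1, y) (x, y) (x, y) 1 = 0 := by
  unfold hc
  dsimp only
  simp only [Prod.mk.injEq]
  split_ifs <;> (try simp_all only [true_and, and_true]) <;> omega

lemma hcp_out_R (x y : ℤ) : hc (x, y) (x + 1, y) (x, y) 1 = 1 := by
  unfold hc
  dsimp only
  simp only [Prod.mk.injEq]
  split_ifs <;> (try simp only [true_and, and_true] at *) <;> omega

lemma din_L (p : ℤ × ℤ) (x y : ℤ) (h : (x, y) - p = (-1, 0)) : p = (x + 1, y) := by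
  obtain ⟨p1, p2⟩ := p; simp only [Prod.mk_sub_mk, Prod.mk.injEq] at h ⊢; omega

lemma dout_L (p : ℤ × ℤ) (x y : ℤ) (h : p - (x, y) = (-1, 0)) : p = (x - 1, y) := by
  obtain ⟨p1, p2⟩ := p; simp only [Prod.mk_sub_mk, Prod.mk.injEq] at h ⊢; omega

lemma tvm_in_L (x y : ℤ) : tv (x + 1, y) (x, y) (x, y) (-1) = 0 := by
  unfold tv
  dsimp only
  simp only [Prod.mk.injEq]
  split_ifs <;> omega

lemma tvm_out_L (x y : ℤ) : tv (x, y) (x - 1, y) (x, y) (-1) = 0 := by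
  unfold tv
  dsimp only
  simp only [Prod.mk.injEq]
  split_ifs <;> omega

lemma tvp_in_L (x y : ℤ) : tv (x + 1, y) (x, y) (x, y) 1 = 0 := by
  unfold tv
  dsimp only
  simp only [Prod.mk.injEq]
  split_ifs <;> omega

lemma tvp_out_L (x y : ℤ) : tv (x, y) (x - 1, y) (x, y) 1 = 0 := by
  unfold tv
  dsimp only
  simp only [Prod.mk.injEq]
  split_ifs <;> omega

lemma hcm_in_L (x y : ℤ) : hc (x + 1, y) (x, y) (x, y) (-1) = 0 := by
  unfold hc
  dsimp only
  simp only [Prod.mk.injEq]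
  split_ifs <;> (try simp_all only [true_and, and_true]) <;> omega

lemma hcm_out_L (x y : ℤ) : hc (x, y) (x - 1, y) (x, y) (-1) = -1 := by
  unfold hc
  dsimp only
  simp only [Prod.mk.injEq]
  split_ifs <;> (try simp only [true_and, and_true] at *) <;> omega

lemma hcp_in_L (x y : ℤ) : hc (x + 1, y) (x, y) (x, y) 1 = -1 := by
  unfold hc
  dsimp only
  simp only [Prod.mk.injEq]
  split_ifs <;> (try simp_all only [true_and, and_true]) <;> omega

lemma hcp_out_L (x y : ℤ) : hc (x, y) (x - 1, y) (x, y) 1 = 0 := by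
  unfold hc
  dsimp only
  simp only [Prod.mk.injEq]
  split_ifs <;> omega

lemma din_U (p : ℤ × ℤ) (x y : ℤ) (h : (x, y) - p = (0, 1)) : p = (x, y - 1) := by
  obtain ⟨p1, p2⟩ := p; simp only [Prod.mk_sub_mk, Prod.mk.injEq] at h ⊢; omega

lemma dout_U (p : ℤ × ℤ) (x y : ℤ) (h : p - (x, y) = (0, 1)) : p = (x, y + 1) := by
  obtain ⟨p1, p2⟩ := p; simp only [Prod.mk_sub_mk, Prod.mk.injEq] at h ⊢; omega

lemma tvm_in_U (x y : ℤ) : tv (x, y - 1) (x, y) (x, y) (-1) = 1 := by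
  unfold tv
  dsimp only
  simp only [Prod.mk.injEq]
  split_ifs <;> (try simp_all only [true_and, and_true]) <;> omega

lemma tvm_out_U (x y : ℤ) : tv (x, y) (x, y + 1) (x, y) (-1) = 0 := by
  unfold tv
  dsimp only
  simp only [Prod.mk.injEq]
  split_ifs <;> omega

lemma tvp_in_U (x y : ℤ) : tv (x, y - 1) (x, y) (x, y) 1 = 0 := by
  unfold tv
  dsimp only
  simp only [Prod.mk.injEq]
  split_ifs <;> (try simp_all only [true_and, and_true]) <;> omega

lemma tvp_out_U (x y : ℤ) : tv (x, y) (x, y + 1) (x, y) 1 = 1 := by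
  unfold tv
  dsimp only
  simp only [Prod.mk.injEq]
  split_ifs <;> (try simp only [true_and, and_true] at *) <;> omega

lemma hcm_in_U (x y : ℤ) : hc (x, y - 1) (x, y) (x, y) (-1) = 0 := by
  unfold hc
  dsimp only
  simp only [Prod.mk.injEq]
  split_ifs <;> omega

lemma hcm_out_U (x y : ℤ) : hc (x, y) (x, y + 1) (x, y) (-1) = 0 := by
  unfold hc
  dsimp only
  simp only [Prod.mk.injEq]
  split_ifs <;> omega

lemma hcp_in_U (x y : ℤ) : hc (x, y - 1) (x, y) (x, y) 1 = 0 := by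
  unfold hc
  dsimp only
  simp only [Prod.mk.injEq]
  split_ifs <;> omega

lemma hcp_out_U (x y : ℤ) : hc (x, y) (x, y + 1) (x, y) 1 = 0 := by
  unfold hc
  dsimp only
  simp only [Prod.mk.injEq]
  split_ifs <;> omega

lemma din_D (p : ℤ × ℤ) (x y : ℤ) (h : (x, y) - p = (0, -1)) : p = (x, y + 1) := by
  obtain ⟨p1, p2⟩ := p; simp only [Prod.mk_sub_mk, Prod.mk.injEq] at h ⊢; omega

lemma dout_D (p : ℤ × ℤ) (x y : ℤ) (h : p - (x, y) = (0, -1)) : p = (x, y - 1) := by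
  obtain ⟨p1, p2⟩ := p; simp only [Prod.mk_sub_mk, Prod.mk.injEq] at h ⊢; omega

lemma tvm_in_D (x y : ℤ) : tv (x, y + 1) (x, y) (x, y) (-1) = 0 := by
  unfold tv
  dsimp only
  simp only [Prod.mk.injEq]
  split_ifs <;> (try simp_all only [true_and, and_true]) <;> omega

lemma tvm_out_D (x y : ℤ) : tv (x, y) (x, y - 1) (x, y) (-1) = -1 := by
  unfold tv
  dsimp only
  simp only [Prod.mk.injEq]
  split_ifs <;> (try simp only [true_and, and_true] at *) <;> omega

lemma tvp_in_D (x y : ℤ) : tv (x, y + 1) (x, y) (x, y) 1 = -1 := by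
  unfold tv
  dsimp only
  simp only [Prod.mk.injEq]
  split_ifs <;> (try simp_all only [true_and, and_true]) <;> omega

lemma tvp_out_D (x y : ℤ) : tv (x, y) (x, y - 1) (x, y) 1 = 0 := by
  unfold tv
  dsimp only
  simp only [Prod.mk.injEq]
  split_ifs <;> omega

lemma hcm_in_D (x y : ℤ) : hc (x, y + 1) (x, y) (x, y) (-1) = 0 := by
  unfold hc
  dsimp only
  simp only [Prod.mk.injEq]
  split_ifs <;> omega

lemma hcm_out_D (x y : ℤ) : hc (x, y) (x, y - 1) (x, y) (-1) = 0 := by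
  unfold hc
  dsimp only
  simp only [Prod.mk.injEq]
  split_ifs <;> omega

lemma hcp_in_D (x y : ℤ) : hc (x, y + 1) (x, y) (x, y) 1 = 0 := by
  unfold hc
  dsimp only
  simp only [Prod.mk.injEq]
  split_ifs <;> omega

lemma hcp_out_D (x y : ℤ) : hc (x, y) (x, y - 1) (x, y) 1 = 0 := by
  unfold hc
  dsimp only
  simp only [Prod.mk.injEq]
  split_ifs <;> omega
/-- Lemma 3.3: `topw(γ,v) - metricw(γ,v) = angle(γ,v)` when `v` is
a vertex of `γ`, and `topw(γ,v) - metricw(γ,v) = 0` otherwise. -/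
theorem topw_sub_metricw (γ : LatticeCycle) (v : ℤ × ℤ) :
    (γ.isVertex v → topw γ v - metricw γ v = angle γ v) ∧
    (¬ γ.isVertex v → topw γ v - metricw γ v = 0) := by
  obtain ⟨x, y⟩ := v
  have hn4 := γ.four_le
  by_cases hv : γ.isVertex (x, y)
  · refine ⟨fun _ => ?_, fun h => absurd hv h⟩
    obtain ⟨i, hi, hvi⟩ := id hv
    have hv0 : ∀ j, j < γ.n → γ.v j = (x, y) → j = i :=
      fun j hj h => γ.inj j i hj hi (h.trans hvi.symm)
    have h0n : γ.v γ.n = γ.v 0 := by have := γ.periodic 0; rwa [zero_add] at this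
    obtain ⟨ip, hip, hipne, hip1, hpred', hv1⟩ :
        ∃ ip, ip < γ.n ∧ ip ≠ i ∧ γ.v (ip + 1) = (x, y) ∧
          γ.v (i + γ.n - 1) = γ.v ip ∧ ∀ j, j < γ.n → γ.v (j + 1) = (x, y) → j = ip := by
      by_cases h0 : i = 0
      · subst h0
        refine ⟨γ.n - 1, by omega, by omega, ?_, congrArg γ.v (by omega), ?_⟩
        · have h1 : γ.n - 1 + 1 = γ.n := by omega
          rw [h1, h0n]; exact hvi
        · intro j hj hjv
          rcases Nat.lt_or_ge (j + 1) γ.n with h2 | h2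
          · have := hv0 (j + 1) h2 hjv; omega
          · omega
      · refine ⟨i - 1, by omega, by omega, ?_, ?_, ?_⟩
        · have h1 : i - 1 + 1 = i := by omega
          rw [h1]; exact hvi
        · have h1 : i + γ.n - 1 = (i - 1) + γ.n := by omega
          rw [h1, γ.periodic]
        · intro j hj hjv
          rcases Nat.lt_or_ge (j + 1) γ.n with h2 | h2
          · have := hv0 (j + 1) h2 hjv; omega
          · have hj1 : j + 1 = γ.n := by omega
            have h3 : γ.v 0 = (x, y) := by rw [← h0n, ← hj1]; exact hjv
            have := hv0 0 (by omega) h3; omega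
    have R1 : wind γ (corner (x, y) (-1) (-1)) - wind γ (corner (x, y) 1 (-1)) =
        tv (γ.v ip) (x, y) (x, y) (-1) + tv (x, y) (γ.v (i + 1)) (x, y) (-1) := by
      rw [wind_sub_lr, sum_two_s6 γ (x, y) _ i ip hi hip hipne hv0 hv1
        (fun u w h => tv_ne u w _ _ (Or.inl rfl) h), hip1, hvi]
    have R2 : wind γ (corner (x, y) (-1) 1) - wind γ (corner (x, y) 1 1) =
        tv (γ.v ip) (x, y) (x, y) 1 + tv (x, y) (γ.v (i + 1)) (x, y) 1 := by
      rw [wind_sub_lr, sum_two_s6 γ (x, y) _ i ip hi hip hipne hv0 hv1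
        (fun u w h => tv_ne u w _ _ (Or.inr rfl) h), hip1, hvi]
    have R3 : wind γ (corner (x, y) (-1) (-1)) - wind γ (corner (x, y) (-1) 1) =
        -(hc (γ.v ip) (x, y) (x, y) (-1) + hc (x, y) (γ.v (i + 1)) (x, y) (-1)) := by
      rw [wind_sub_ud γ (x, y) (-1) (Or.inl rfl), sum_two_s6 γ (x, y) _ i ip hi hip hipne hv0 hv1
        (fun u w h => hc_ne u w _ _ (Or.inl rfl) h), hip1, hvi]
    have R4 : wind γ (corner (x, y) 1 (-1)) - wind γ (corner (x, y) 1 1) =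
        -(hc (γ.v ip) (x, y) (x, y) 1 + hc (x, y) (γ.v (i + 1)) (x, y) 1) := by
      rw [wind_sub_ud γ (x, y) 1 (Or.inr rfl), sum_two_s6 γ (x, y) _ i ip hi hip hipne hv0 hv1
        (fun u w h => hc_ne u w _ _ (Or.inr rfl) h), hip1, hvi]
    have hsi := γ.step i
    rw [hvi] at hsi
    have hsp := γ.step ip
    rw [hip1] at hsp
    rcases hsp with hin | hin | hin | hin <;> rcases hsi with hout | hout | hout | hout
    · -- din = R, dout = R
      have e_in := din_R (γ.v ip) x y hin
      have e_out := dout_R (γ.v (i + 1)) x y hout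
      rw [e_in, e_out] at R1 R2 R3 R4
      rw [tvm_in_R, tvm_out_R] at R1
      rw [tvp_in_R, tvp_out_R] at R2
      rw [hcm_in_R, hcm_out_R] at R3
      rw [hcp_in_R, hcp_out_R] at R4
      have hdin : γ.v (i + γ.n) - γ.v (i + γ.n - 1) = (1, 0) := by
        rw [γ.periodic i, hvi, hpred']; exact hin
      have hdout : γ.v (i + 1) - γ.v i = (1, 0) := by
        rw [hvi]; exact hout
      have hang : angle γ (x, y) = (0 : ℚ) := by
        rw [angle_eq γ (x, y) i hi hvi, angleAt_eval γ i _ _ hdin hdout]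
        norm_num [Prod.mk.injEq]
      rw [hang]
      have hset : windSet γ (x, y) = {(wind γ (corner (x, y) (-1) (-1))), (wind γ (corner (x, y) (-1) (-1))) + 1} := by
        unfold windSet
        ext t
        simp only [Finset.mem_insert, Finset.mem_singleton]
        omega
      rw [eval_mixed γ (x, y) (wind γ (corner (x, y) (-1) (-1))) 2 (by omega) hset]
      norm_num
    · -- din = R, dout = L
      have e_in := din_R (γ.v ip) x y hin
      have e_out := dout_L (γ.v (i + 1)) x y hout
      rw [e_in, e_out] at R1 R2 R3 R4
      rw [tvm_in_R, tvm_out_L] at R1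
      rw [tvp_in_R, tvp_out_L] at R2
      rw [hcm_in_R, hcm_out_L] at R3
      rw [hcp_in_R, hcp_out_L] at R4
      have hdin : γ.v (i + γ.n) - γ.v (i + γ.n - 1) = (1, 0) := by
        rw [γ.periodic i, hvi, hpred']; exact hin
      have hdout : γ.v (i + 1) - γ.v i = (-1, 0) := by
        rw [hvi]; exact hout
      have hang : angle γ (x, y) = (0 : ℚ) := by
        rw [angle_eq γ (x, y) i hi hvi, angleAt_eval γ i _ _ hdin hdout]
        norm_num [Prod.mk.injEq]
      rw [hang]
      have hset : windSet γ (x, y) = {wind γ (corner (x, y) (-1) (-1))} := by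
        unfold windSet
        ext t
        simp only [Finset.mem_insert, Finset.mem_singleton]
        omega
      exact eval_eq γ (x, y) (wind γ (corner (x, y) (-1) (-1))) (by omega) hset
    · -- din = R, dout = U
      have e_in := din_R (γ.v ip) x y hin
      have e_out := dout_U (γ.v (i + 1)) x y hout
      rw [e_in, e_out] at R1 R2 R3 R4
      rw [tvm_in_R, tvm_out_U] at R1
      rw [tvp_in_R, tvp_out_U] at R2
      rw [hcm_in_R, hcm_out_U] at R3
      rw [hcp_in_R, hcp_out_U] at R4
      have hdin : γ.v (i + γ.n) - γ.v (i + γ.n - 1) = (1, 0) := by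
        rw [γ.periodic i, hvi, hpred']; exact hin
      have hdout : γ.v (i + 1) - γ.v i = (0, 1) := by
        rw [hvi]; exact hout
      have hang : angle γ (x, y) = (1/4 : ℚ) := by
        rw [angle_eq γ (x, y) i hi hvi, angleAt_eval γ i _ _ hdin hdout]
        norm_num [Prod.mk.injEq]
      rw [hang]
      have hset : windSet γ (x, y) = {(wind γ (corner (x, y) (-1) (-1))), (wind γ (corner (x, y) (-1) (-1))) + 1} := by
        unfold windSet
        ext t
        simp only [Finset.mem_insert, Finset.mem_singleton]
        omega
      rw [eval_mixed γ (x, y) (wind γ (corner (x, y) (-1) (-1))) 1 (by omega) hset]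
      norm_num
    · -- din = R, dout = D
      have e_in := din_R (γ.v ip) x y hin
      have e_out := dout_D (γ.v (i + 1)) x y hout
      rw [e_in, e_out] at R1 R2 R3 R4
      rw [tvm_in_R, tvm_out_D] at R1
      rw [tvp_in_R, tvp_out_D] at R2
      rw [hcm_in_R, hcm_out_D] at R3
      rw [hcp_in_R, hcp_out_D] at R4
      have hdin : γ.v (i + γ.n) - γ.v (i + γ.n - 1) = (1, 0) := by
        rw [γ.periodic i, hvi, hpred']; exact hin
      have hdout : γ.v (i + 1) - γ.v i = (0, -1) := by
        rw [hvi]; exact hout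
      have hang : angle γ (x, y) = (-1/4 : ℚ) := by
        rw [angle_eq γ (x, y) i hi hvi, angleAt_eval γ i _ _ hdin hdout]
        norm_num [Prod.mk.injEq]
      rw [hang]
      have hset : windSet γ (x, y) = {(wind γ (corner (x, y) (-1) (-1))), (wind γ (corner (x, y) (-1) (-1))) + 1} := by
        unfold windSet
        ext t
        simp only [Finset.mem_insert, Finset.mem_singleton]
        omega
      rw [eval_mixed γ (x, y) (wind γ (corner (x, y) (-1) (-1))) 3 (by omega) hset]
      norm_num
    · -- din = L, dout = R
      have e_in := din_L (γ.v ip) x y hin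
      have e_out := dout_R (γ.v (i + 1)) x y hout
      rw [e_in, e_out] at R1 R2 R3 R4
      rw [tvm_in_L, tvm_out_R] at R1
      rw [tvp_in_L, tvp_out_R] at R2
      rw [hcm_in_L, hcm_out_R] at R3
      rw [hcp_in_L, hcp_out_R] at R4
      have hdin : γ.v (i + γ.n) - γ.v (i + γ.n - 1) = (-1, 0) := by
        rw [γ.periodic i, hvi, hpred']; exact hin
      have hdout : γ.v (i + 1) - γ.v i = (1, 0) := by
        rw [hvi]; exact hout
      have hang : angle γ (x, y) = (0 : ℚ) := by
        rw [angle_eq γ (x, y) i hi hvi, angleAt_eval γ i _ _ hdin hdout]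
        norm_num [Prod.mk.injEq]
      rw [hang]
      have hset : windSet γ (x, y) = {wind γ (corner (x, y) (-1) (-1))} := by
        unfold windSet
        ext t
        simp only [Finset.mem_insert, Finset.mem_singleton]
        omega
      exact eval_eq γ (x, y) (wind γ (corner (x, y) (-1) (-1))) (by omega) hset
    · -- din = L, dout = L
      have e_in := din_L (γ.v ip) x y hin
      have e_out := dout_L (γ.v (i + 1)) x y hout
      rw [e_in, e_out] at R1 R2 R3 R4
      rw [tvm_in_L, tvm_out_L] at R1
      rw [tvp_in_L, tvp_out_L] at R2
      rw [hcm_in_L, hcm_out_L] at R3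
      rw [hcp_in_L, hcp_out_L] at R4
      have hdin : γ.v (i + γ.n) - γ.v (i + γ.n - 1) = (-1, 0) := by
        rw [γ.periodic i, hvi, hpred']; exact hin
      have hdout : γ.v (i + 1) - γ.v i = (-1, 0) := by
        rw [hvi]; exact hout
      have hang : angle γ (x, y) = (0 : ℚ) := by
        rw [angle_eq γ (x, y) i hi hvi, angleAt_eval γ i _ _ hdin hdout]
        norm_num [Prod.mk.injEq]
      rw [hang]
      have hset : windSet γ (x, y) = {(wind γ (corner (x, y) (-1) (-1)) - 1), (wind γ (corner (x, y) (-1) (-1)) - 1) + 1} := by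
        unfold windSet
        ext t
        simp only [Finset.mem_insert, Finset.mem_singleton]
        omega
      rw [eval_mixed γ (x, y) (wind γ (corner (x, y) (-1) (-1)) - 1) 2 (by omega) hset]
      norm_num
    · -- din = L, dout = U
      have e_in := din_L (γ.v ip) x y hin
      have e_out := dout_U (γ.v (i + 1)) x y hout
      rw [e_in, e_out] at R1 R2 R3 R4
      rw [tvm_in_L, tvm_out_U] at R1
      rw [tvp_in_L, tvp_out_U] at R2
      rw [hcm_in_L, hcm_out_U] at R3
      rw [hcp_in_L, hcp_out_U] at R4
      have hdin : γ.v (i + γ.n) - γ.v (i + γ.n - 1) = (-1, 0) := by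
        rw [γ.periodic i, hvi, hpred']; exact hin
      have hdout : γ.v (i + 1) - γ.v i = (0, 1) := by
        rw [hvi]; exact hout
      have hang : angle γ (x, y) = (-1/4 : ℚ) := by
        rw [angle_eq γ (x, y) i hi hvi, angleAt_eval γ i _ _ hdin hdout]
        norm_num [Prod.mk.injEq]
      rw [hang]
      have hset : windSet γ (x, y) = {(wind γ (corner (x, y) (-1) (-1)) - 1), (wind γ (corner (x, y) (-1) (-1)) - 1) + 1} := by
        unfold windSet
        ext t
        simp only [Finset.mem_insert, Finset.mem_singleton]
        omega
      rw [eval_mixed γ (x, y) (wind γ (corner (x, y) (-1) (-1)) - 1) 3 (by omega) hset]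
      norm_num
    · -- din = L, dout = D
      have e_in := din_L (γ.v ip) x y hin
      have e_out := dout_D (γ.v (i + 1)) x y hout
      rw [e_in, e_out] at R1 R2 R3 R4
      rw [tvm_in_L, tvm_out_D] at R1
      rw [tvp_in_L, tvp_out_D] at R2
      rw [hcm_in_L, hcm_out_D] at R3
      rw [hcp_in_L, hcp_out_D] at R4
      have hdin : γ.v (i + γ.n) - γ.v (i + γ.n - 1) = (-1, 0) := by
        rw [γ.periodic i, hvi, hpred']; exact hin
      have hdout : γ.v (i + 1) - γ.v i = (0, -1) := by
        rw [hvi]; exact hout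
      have hang : angle γ (x, y) = (1/4 : ℚ) := by
        rw [angle_eq γ (x, y) i hi hvi, angleAt_eval γ i _ _ hdin hdout]
        norm_num [Prod.mk.injEq]
      rw [hang]
      have hset : windSet γ (x, y) = {(wind γ (corner (x, y) (-1) (-1))), (wind γ (corner (x, y) (-1) (-1))) + 1} := by
        unfold windSet
        ext t
        simp only [Finset.mem_insert, Finset.mem_singleton]
        omega
      rw [eval_mixed γ (x, y) (wind γ (corner (x, y) (-1) (-1))) 1 (by omega) hset]
      norm_num
    · -- din = U, dout = R
      have e_in := din_U (γ.v ip) x y hin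
      have e_out := dout_R (γ.v (i + 1)) x y hout
      rw [e_in, e_out] at R1 R2 R3 R4
      rw [tvm_in_U, tvm_out_R] at R1
      rw [tvp_in_U, tvp_out_R] at R2
      rw [hcm_in_U, hcm_out_R] at R3
      rw [hcp_in_U, hcp_out_R] at R4
      have hdin : γ.v (i + γ.n) - γ.v (i + γ.n - 1) = (0, 1) := by
        rw [γ.periodic i, hvi, hpred']; exact hin
      have hdout : γ.v (i + 1) - γ.v i = (1, 0) := by
        rw [hvi]; exact hout
      have hang : angle γ (x, y) = (-1/4 : ℚ) := by
        rw [angle_eq γ (x, y) i hi hvi, angleAt_eval γ i _ _ hdin hdout]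
        norm_num [Prod.mk.injEq]
      rw [hang]
      have hset : windSet γ (x, y) = {(wind γ (corner (x, y) (-1) (-1)) - 1), (wind γ (corner (x, y) (-1) (-1)) - 1) + 1} := by
        unfold windSet
        ext t
        simp only [Finset.mem_insert, Finset.mem_singleton]
        omega
      rw [eval_mixed γ (x, y) (wind γ (corner (x, y) (-1) (-1)) - 1) 3 (by omega) hset]
      norm_num
    · -- din = U, dout = L
      have e_in := din_U (γ.v ip) x y hin
      have e_out := dout_L (γ.v (i + 1)) x y hout
      rw [e_in, e_out] at R1 R2 R3 R4
      rw [tvm_in_U, tvm_out_L] at R1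
      rw [tvp_in_U, tvp_out_L] at R2
      rw [hcm_in_U, hcm_out_L] at R3
      rw [hcp_in_U, hcp_out_L] at R4
      have hdin : γ.v (i + γ.n) - γ.v (i + γ.n - 1) = (0, 1) := by
        rw [γ.periodic i, hvi, hpred']; exact hin
      have hdout : γ.v (i + 1) - γ.v i = (-1, 0) := by
        rw [hvi]; exact hout
      have hang : angle γ (x, y) = (1/4 : ℚ) := by
        rw [angle_eq γ (x, y) i hi hvi, angleAt_eval γ i _ _ hdin hdout]
        norm_num [Prod.mk.injEq]
      rw [hang]
      have hset : windSet γ (x, y) = {(wind γ (corner (x, y) (-1) (-1)) - 1), (wind γ (corner (x, y) (-1) (-1)) - 1) + 1} := by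
        unfold windSet
        ext t
        simp only [Finset.mem_insert, Finset.mem_singleton]
        omega
      rw [eval_mixed γ (x, y) (wind γ (corner (x, y) (-1) (-1)) - 1) 1 (by omega) hset]
      norm_num
    · -- din = U, dout = U
      have e_in := din_U (γ.v ip) x y hin
      have e_out := dout_U (γ.v (i + 1)) x y hout
      rw [e_in, e_out] at R1 R2 R3 R4
      rw [tvm_in_U, tvm_out_U] at R1
      rw [tvp_in_U, tvp_out_U] at R2
      rw [hcm_in_U, hcm_out_U] at R3
      rw [hcp_in_U, hcp_out_U] at R4
      have hdin : γ.v (i + γ.n) - γ.v (i + γ.n - 1) = (0, 1) := by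
        rw [γ.periodic i, hvi, hpred']; exact hin
      have hdout : γ.v (i + 1) - γ.v i = (0, 1) := by
        rw [hvi]; exact hout
      have hang : angle γ (x, y) = (0 : ℚ) := by
        rw [angle_eq γ (x, y) i hi hvi, angleAt_eval γ i _ _ hdin hdout]
        norm_num [Prod.mk.injEq]
      rw [hang]
      have hset : windSet γ (x, y) = {(wind γ (corner (x, y) (-1) (-1)) - 1), (wind γ (corner (x, y) (-1) (-1)) - 1) + 1} := by
        unfold windSet
        ext t
        simp only [Finset.mem_insert, Finset.mem_singleton]
        omega
      rw [eval_mixed γ (x, y) (wind γ (corner (x, y) (-1) (-1)) - 1) 2 (by omega) hset]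
      norm_num
    · -- din = U, dout = D
      have e_in := din_U (γ.v ip) x y hin
      have e_out := dout_D (γ.v (i + 1)) x y hout
      rw [e_in, e_out] at R1 R2 R3 R4
      rw [tvm_in_U, tvm_out_D] at R1
      rw [tvp_in_U, tvp_out_D] at R2
      rw [hcm_in_U, hcm_out_D] at R3
      rw [hcp_in_U, hcp_out_D] at R4
      have hdin : γ.v (i + γ.n) - γ.v (i + γ.n - 1) = (0, 1) := by
        rw [γ.periodic i, hvi, hpred']; exact hin
      have hdout : γ.v (i + 1) - γ.v i = (0, -1) := by
        rw [hvi]; exact hout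
      have hang : angle γ (x, y) = (0 : ℚ) := by
        rw [angle_eq γ (x, y) i hi hvi, angleAt_eval γ i _ _ hdin hdout]
        norm_num [Prod.mk.injEq]
      rw [hang]
      have hset : windSet γ (x, y) = {wind γ (corner (x, y) (-1) (-1))} := by
        unfold windSet
        ext t
        simp only [Finset.mem_insert, Finset.mem_singleton]
        omega
      exact eval_eq γ (x, y) (wind γ (corner (x, y) (-1) (-1))) (by omega) hset
    · -- din = D, dout = R
      have e_in := din_D (γ.v ip) x y hin
      have e_out := dout_R (γ.v (i + 1)) x y hout
      rw [e_in, e_out] at R1 R2 R3 R4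
      rw [tvm_in_D, tvm_out_R] at R1
      rw [tvp_in_D, tvp_out_R] at R2
      rw [hcm_in_D, hcm_out_R] at R3
      rw [hcp_in_D, hcp_out_R] at R4
      have hdin : γ.v (i + γ.n) - γ.v (i + γ.n - 1) = (0, -1) := by
        rw [γ.periodic i, hvi, hpred']; exact hin
      have hdout : γ.v (i + 1) - γ.v i = (1, 0) := by
        rw [hvi]; exact hout
      have hang : angle γ (x, y) = (1/4 : ℚ) := by
        rw [angle_eq γ (x, y) i hi hvi, angleAt_eval γ i _ _ hdin hdout]
        norm_num [Prod.mk.injEq]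
      rw [hang]
      have hset : windSet γ (x, y) = {(wind γ (corner (x, y) (-1) (-1))), (wind γ (corner (x, y) (-1) (-1))) + 1} := by
        unfold windSet
        ext t
        simp only [Finset.mem_insert, Finset.mem_singleton]
        omega
      rw [eval_mixed γ (x, y) (wind γ (corner (x, y) (-1) (-1))) 1 (by omega) hset]
      norm_num
    · -- din = D, dout = L
      have e_in := din_D (γ.v ip) x y hin
      have e_out := dout_L (γ.v (i + 1)) x y hout
      rw [e_in, e_out] at R1 R2 R3 R4
      rw [tvm_in_D, tvm_out_L] at R1
      rw [tvp_in_D, tvp_out_L] at R2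
      rw [hcm_in_D, hcm_out_L] at R3
      rw [hcp_in_D, hcp_out_L] at R4
      have hdin : γ.v (i + γ.n) - γ.v (i + γ.n - 1) = (0, -1) := by
        rw [γ.periodic i, hvi, hpred']; exact hin
      have hdout : γ.v (i + 1) - γ.v i = (-1, 0) := by
        rw [hvi]; exact hout
      have hang : angle γ (x, y) = (-1/4 : ℚ) := by
        rw [angle_eq γ (x, y) i hi hvi, angleAt_eval γ i _ _ hdin hdout]
        norm_num [Prod.mk.injEq]
      rw [hang]
      have hset : windSet γ (x, y) = {(wind γ (corner (x, y) (-1) (-1)) - 1), (wind γ (corner (x, y) (-1) (-1)) - 1) + 1} := by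
        unfold windSet
        ext t
        simp only [Finset.mem_insert, Finset.mem_singleton]
        omega
      rw [eval_mixed γ (x, y) (wind γ (corner (x, y) (-1) (-1)) - 1) 3 (by omega) hset]
      norm_num
    · -- din = D, dout = U
      have e_in := din_D (γ.v ip) x y hin
      have e_out := dout_U (γ.v (i + 1)) x y hout
      rw [e_in, e_out] at R1 R2 R3 R4
      rw [tvm_in_D, tvm_out_U] at R1
      rw [tvp_in_D, tvp_out_U] at R2
      rw [hcm_in_D, hcm_out_U] at R3
      rw [hcp_in_D, hcp_out_U] at R4
      have hdin : γ.v (i + γ.n) - γ.v (i + γ.n - 1) = (0, -1) := by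
        rw [γ.periodic i, hvi, hpred']; exact hin
      have hdout : γ.v (i + 1) - γ.v i = (0, 1) := by
        rw [hvi]; exact hout
      have hang : angle γ (x, y) = (0 : ℚ) := by
        rw [angle_eq γ (x, y) i hi hvi, angleAt_eval γ i _ _ hdin hdout]
        norm_num [Prod.mk.injEq]
      rw [hang]
      have hset : windSet γ (x, y) = {wind γ (corner (x, y) (-1) (-1))} := by
        unfold windSet
        ext t
        simp only [Finset.mem_insert, Finset.mem_singleton]
        omega
      exact eval_eq γ (x, y) (wind γ (corner (x, y) (-1) (-1))) (by omega) hset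
    · -- din = D, dout = D
      have e_in := din_D (γ.v ip) x y hin
      have e_out := dout_D (γ.v (i + 1)) x y hout
      rw [e_in, e_out] at R1 R2 R3 R4
      rw [tvm_in_D, tvm_out_D] at R1
      rw [tvp_in_D, tvp_out_D] at R2
      rw [hcm_in_D, hcm_out_D] at R3
      rw [hcp_in_D, hcp_out_D] at R4
      have hdin : γ.v (i + γ.n) - γ.v (i + γ.n - 1) = (0, -1) := by
        rw [γ.periodic i, hvi, hpred']; exact hin
      have hdout : γ.v (i + 1) - γ.v i = (0, -1) := by
        rw [hvi]; exact hout
      have hang : angle γ (x, y) = (0 : ℚ) := by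
        rw [angle_eq γ (x, y) i hi hvi, angleAt_eval γ i _ _ hdin hdout]
        norm_num [Prod.mk.injEq]
      rw [hang]
      have hset : windSet γ (x, y) = {(wind γ (corner (x, y) (-1) (-1))), (wind γ (corner (x, y) (-1) (-1))) + 1} := by
        unfold windSet
        ext t
        simp only [Finset.mem_insert, Finset.mem_singleton]
        omega
      rw [eval_mixed γ (x, y) (wind γ (corner (x, y) (-1) (-1))) 2 (by omega) hset]
      norm_num
  · refine ⟨fun h => absurd h hv, fun _ => ?_⟩
    have hnv : ∀ j, j < γ.n → γ.v j ≠ (x, y) := fun j hj h => hv ⟨j, hj, h⟩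
    have R1 : wind γ (corner (x, y) (-1) (-1)) - wind γ (corner (x, y) 1 (-1)) = 0 := by
      rw [wind_sub_lr, sum_zero γ (x, y) _ hnv (fun u w h => tv_ne u w _ _ (Or.inl rfl) h)]
    have R2 : wind γ (corner (x, y) (-1) 1) - wind γ (corner (x, y) 1 1) = 0 := by
      rw [wind_sub_lr, sum_zero γ (x, y) _ hnv (fun u w h => tv_ne u w _ _ (Or.inr rfl) h)]
    have R3 : wind γ (corner (x, y) (-1) (-1)) - wind γ (corner (x, y) (-1) 1) = 0 := by
      rw [wind_sub_ud γ (x, y) (-1) (Or.inl rfl),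
        sum_zero γ (x, y) _ hnv (fun u w h => hc_ne u w _ _ (Or.inl rfl) h)]
      ring
    have hset : windSet γ (x, y) = {wind γ (corner (x, y) (-1) (-1))} := by
      unfold windSet
      ext t
      simp only [Finset.mem_insert, Finset.mem_singleton]
      omega
    exact eval_eq γ (x, y) (wind γ (corner (x, y) (-1) (-1))) (by omega) hset
end

section
/- Let γ be an oriented simple lattice cycle and let v be a vertex of γ. If γ is counterclockwise oriented then topw(γ,v) = 1/2, and if γ is clockwise oriented then topw(γ,v) = −1/2. -/
open scoped Classical

-- AUX LEMMAS

lemma LC_v_add_mul (γ : LatticeCycle) (r q : ℕ) : γ.v (q * γ.n + r) = γ.v r := by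
  induction q with
  | zero => simp
  | succ q ih =>
    have h := γ.periodic (q * γ.n + r)
    rw [show q * γ.n + r + γ.n = (q + 1) * γ.n + r by ring] at h
    rw [h, ih]

lemma LC_v_mod (γ : LatticeCycle) (m : ℕ) : γ.v m = γ.v (m % γ.n) := by
  conv_lhs => rw [← Nat.div_add_mod m γ.n]
  have h := LC_v_add_mul γ (m % γ.n) (m / γ.n)
  rw [mul_comm] at h
  exact h

lemma LC_inj_mod (γ : LatticeCycle) {i j : ℕ} (h : γ.v i = γ.v j) :
    i % γ.n = j % γ.n := by
  have hn : 0 < γ.n := by have := γ.four_le; omega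
  exact γ.inj _ _ (Nat.mod_lt _ hn) (Nat.mod_lt _ hn)
    (by rw [← LC_v_mod, ← LC_v_mod]; exact h)

lemma LC_no_reverse (γ : LatticeCycle) {i j : ℕ} (hi : i < γ.n) (hj : j < γ.n)
    (h1 : γ.v j = γ.v (i + 1)) (h2 : γ.v (j + 1) = γ.v i) : False := by
  have hn := γ.four_le
  have e1 := LC_inj_mod γ h1
  have e2 := LC_inj_mod γ h2
  rw [Nat.mod_eq_of_lt hj] at e1
  rw [Nat.mod_eq_of_lt hi] at e2
  by_cases hi1 : i + 1 < γ.n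
  · rw [Nat.mod_eq_of_lt hi1] at e1
    subst e1
    by_cases hi2 : i + 1 + 1 < γ.n
    · rw [Nat.mod_eq_of_lt hi2] at e2; omega
    · have h3 : i + 1 + 1 = γ.n := by omega
      rw [h3, Nat.mod_self] at e2; omega
  · have h3 : i + 1 = γ.n := by omega
    rw [h3, Nat.mod_self] at e1
    subst e1
    rw [Nat.mod_eq_of_lt (by omega)] at e2
    omega

lemma LC_inj' (γ : LatticeCycle) {i j : ℕ} (hi : i < γ.n) (hj : j < γ.n) (hne : j ≠ i)
    (a b : ℤ) (h1 : γ.v i = (a, b)) : ¬((γ.v j).1 = a ∧ (γ.v j).2 = b) := by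
  rintro ⟨p, q⟩
  exact hne (γ.inj j i hj hi (by rw [h1]; exact Prod.ext p q))

lemma LC_no_reverse' (γ : LatticeCycle) {i j : ℕ} (hi : i < γ.n) (hj : j < γ.n)
    (a b c d : ℤ) (h1 : γ.v i = (a, b)) (h2 : γ.v (i + 1) = (c, d)) :
    ¬((γ.v j).1 = c ∧ (γ.v j).2 = d ∧ (γ.v (j + 1)).1 = a ∧ (γ.v (j + 1)).2 = b) := by
  rintro ⟨p, q, r, s⟩
  exact LC_no_reverse γ hi hj (by rw [h2]; exact Prod.ext p q)
    (by rw [h1]; exact Prod.ext r s)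

lemma LC_step' (γ : LatticeCycle) (j : ℕ) :
    ((γ.v (j + 1)).1 = (γ.v j).1 + 1 ∧ (γ.v (j + 1)).2 = (γ.v j).2) ∨
    ((γ.v (j + 1)).1 = (γ.v j).1 - 1 ∧ (γ.v (j + 1)).2 = (γ.v j).2) ∨
    ((γ.v (j + 1)).1 = (γ.v j).1 ∧ (γ.v (j + 1)).2 = (γ.v j).2 + 1) ∨
    ((γ.v (j + 1)).1 = (γ.v j).1 ∧ (γ.v (j + 1)).2 = (γ.v j).2 - 1) := by
  rcases γ.step j with h | h | h | h
  · have h1 : (γ.v (j + 1)).1 - (γ.v j).1 = 1 := by rw [← Prod.fst_sub, h]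
    have h2 : (γ.v (j + 1)).2 - (γ.v j).2 = 0 := by rw [← Prod.snd_sub, h]
    omega
  · have h1 : (γ.v (j + 1)).1 - (γ.v j).1 = -1 := by rw [← Prod.fst_sub, h]
    have h2 : (γ.v (j + 1)).2 - (γ.v j).2 = 0 := by rw [← Prod.snd_sub, h]
    omega
  · have h1 : (γ.v (j + 1)).1 - (γ.v j).1 = 0 := by rw [← Prod.fst_sub, h]
    have h2 : (γ.v (j + 1)).2 - (γ.v j).2 = 1 := by rw [← Prod.snd_sub, h]
    omega
  · have h1 : (γ.v (j + 1)).1 - (γ.v j).1 = 0 := by rw [← Prod.fst_sub, h]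
    have h2 : (γ.v (j + 1)).2 - (γ.v j).2 = -1 := by rw [← Prod.snd_sub, h]
    omega

lemma vcross_half (u w : ℤ × ℤ) (x y : ℤ) :
    vcross u w ((x : ℝ) + 1/2, (y : ℝ) + 1/2) =
      if w.1 = u.1 ∧ w.2 = u.2 + 1 ∧ x < u.1 ∧ u.2 = y then 1
      else if u.1 = w.1 ∧ u.2 = w.2 + 1 ∧ x < w.1 ∧ w.2 = y then -1 else 0 := by
  have key : ∀ c d : ℤ,
      ((x : ℝ) + 1/2 < (c : ℝ) ∧ (d : ℝ) ≤ (y : ℝ) + 1/2 ∧ (y : ℝ) + 1/2 < (d : ℝ) + 1)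
        ↔ (x < c ∧ d = y) := by
    intro c d
    constructor
    · rintro ⟨hc, hd1, hd2⟩
      have h1 : (x : ℝ) < c := by linarith
      have h2 : (d : ℝ) < (y : ℝ) + 1 := by linarith
      have h3 : (y : ℝ) < (d : ℝ) + 1 := by linarith
      have h1' : x < c := by exact_mod_cast h1
      have h2' : d < y + 1 := by exact_mod_cast h2
      have h3' : y < d + 1 := by exact_mod_cast h3
      exact ⟨h1', by omega⟩
    · rintro ⟨h1, rfl⟩
      have h1' : x + 1 ≤ c := h1
      have h1'' : (x : ℝ) + 1 ≤ c := by exact_mod_cast h1'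
      refine ⟨by linarith, by linarith, by linarith⟩
  simp only [vcross, Prod.ext_iff, key u.1 u.2, key w.1 w.2, and_assoc]


lemma wind_vert_up (γ : LatticeCycle) {i : ℕ} (hi : i < γ.n) (a b : ℤ)
    (h1 : γ.v i = (a, b)) (h2 : γ.v (i + 1) = (a, b + 1)) :
    wind γ (((a - 1 : ℤ) : ℝ) + 1/2, (b : ℝ) + 1/2) =
      wind γ ((a : ℝ) + 1/2, (b : ℝ) + 1/2) + 1 := by
  have key : ∀ j ∈ Finset.range γ.n,
      vcross (γ.v j) (γ.v (j + 1)) (((a - 1 : ℤ) : ℝ) + 1/2, (b : ℝ) + 1/2) =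
        vcross (γ.v j) (γ.v (j + 1)) ((a : ℝ) + 1/2, (b : ℝ) + 1/2) +
          (if j = i then 1 else 0) := by
    intro j hj
    rw [Finset.mem_range] at hj
    rw [vcross_half, vcross_half]
    by_cases hji : j = i
    · subst hji
      have e1 : (γ.v j).1 = a := by rw [h1]
      have e2 : (γ.v j).2 = b := by rw [h1]
      have e3 : (γ.v (j + 1)).1 = a := by rw [h2]
      have e4 : (γ.v (j + 1)).2 = b + 1 := by rw [h2]
      rw [if_pos rfl]
      split_ifs <;> omega
    · have f1 := LC_inj' γ hi hj hji a b h1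
      have f2 := LC_no_reverse' γ hi hj a b a (b + 1) h1 h2
      rw [if_neg hji]
      split_ifs <;> omega
  unfold wind
  rw [Finset.sum_congr rfl key, Finset.sum_add_distrib,
    Finset.sum_ite_eq' (Finset.range γ.n) i (fun _ => (1 : ℤ)),
    if_pos (Finset.mem_range.mpr hi)]

lemma wind_vert_down (γ : LatticeCycle) {i : ℕ} (hi : i < γ.n) (a b : ℤ)
    (h1 : γ.v i = (a, b + 1)) (h2 : γ.v (i + 1) = (a, b)) :
    wind γ (((a - 1 : ℤ) : ℝ) + 1/2, (b : ℝ) + 1/2) =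
      wind γ ((a : ℝ) + 1/2, (b : ℝ) + 1/2) - 1 := by
  have key : ∀ j ∈ Finset.range γ.n,
      vcross (γ.v j) (γ.v (j + 1)) (((a - 1 : ℤ) : ℝ) + 1/2, (b : ℝ) + 1/2) =
        vcross (γ.v j) (γ.v (j + 1)) ((a : ℝ) + 1/2, (b : ℝ) + 1/2) +
          (if j = i then -1 else 0) := by
    intro j hj
    rw [Finset.mem_range] at hj
    rw [vcross_half, vcross_half]
    by_cases hji : j = i
    · subst hji
      have e1 : (γ.v j).1 = a := by rw [h1]
      have e2 : (γ.v j).2 = b + 1 := by rw [h1]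
      have e3 : (γ.v (j + 1)).1 = a := by rw [h2]
      have e4 : (γ.v (j + 1)).2 = b := by rw [h2]
      rw [if_pos rfl]
      split_ifs <;> omega
    · have f1 := LC_inj' γ hi hj hji a (b + 1) h1
      have f2 := LC_no_reverse' γ hi hj a (b + 1) a b h1 h2
      rw [if_neg hji]
      split_ifs <;> omega
  unfold wind
  rw [Finset.sum_congr rfl key, Finset.sum_add_distrib,
    Finset.sum_ite_eq' (Finset.range γ.n) i (fun _ => (-1 : ℤ)),
    if_pos (Finset.mem_range.mpr hi)]
  ring

set_option maxHeartbeats 1600000 in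
lemma wind_horiz_right (γ : LatticeCycle) {i : ℕ} (hi : i < γ.n) (a b : ℤ)
    (h1 : γ.v i = (a, b)) (h2 : γ.v (i + 1) = (a + 1, b)) :
    wind γ ((a : ℝ) + 1/2, (b : ℝ) + 1/2) =
      wind γ ((a : ℝ) + 1/2, ((b - 1 : ℤ) : ℝ) + 1/2) + 1 := by
  have key : ∀ j ∈ Finset.range γ.n,
      vcross (γ.v j) (γ.v (j + 1)) ((a : ℝ) + 1/2, (b : ℝ) + 1/2) =
        vcross (γ.v j) (γ.v (j + 1)) ((a : ℝ) + 1/2, ((b - 1 : ℤ) : ℝ) + 1/2) +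
          ((if (γ.v j).2 = b ∧ a < (γ.v j).1 then 1 else 0) -
            (if (γ.v (j + 1)).2 = b ∧ a < (γ.v (j + 1)).1 then 1 else 0)) +
          (if j = i then 1 else 0) := by
    intro j hj
    rw [Finset.mem_range] at hj
    rw [vcross_half, vcross_half]
    have hs := LC_step' γ j
    by_cases hji : j = i
    · subst hji
      have e1 : (γ.v j).1 = a := by rw [h1]
      have e2 : (γ.v j).2 = b := by rw [h1]
      have e3 : (γ.v (j + 1)).1 = a + 1 := by rw [h2]
      have e4 : (γ.v (j + 1)).2 = b := by rw [h2]
      rw [if_pos rfl]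
      split_ifs <;> omega
    · have f1 := LC_inj' γ hi hj hji a b h1
      have f2 := LC_no_reverse' γ hi hj a b (a + 1) b h1 h2
      rw [if_neg hji]
      rcases hs with hs | hs | hs | hs <;> split_ifs <;> omega
  unfold wind
  rw [Finset.sum_congr rfl key, Finset.sum_add_distrib, Finset.sum_add_distrib,
    Finset.sum_range_sub' (fun j => if (γ.v j).2 = b ∧ a < (γ.v j).1 then (1 : ℤ) else 0),
    Finset.sum_ite_eq' (Finset.range γ.n) i (fun _ => (1 : ℤ)),
    if_pos (Finset.mem_range.mpr hi)]
  have hper : γ.v γ.n = γ.v 0 := by have := γ.periodic 0; simpa using this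
  rw [hper, sub_self, add_zero]

set_option maxHeartbeats 1600000 in
lemma wind_horiz_left (γ : LatticeCycle) {i : ℕ} (hi : i < γ.n) (a b : ℤ)
    (h1 : γ.v i = (a + 1, b)) (h2 : γ.v (i + 1) = (a, b)) :
    wind γ ((a : ℝ) + 1/2, (b : ℝ) + 1/2) =
      wind γ ((a : ℝ) + 1/2, ((b - 1 : ℤ) : ℝ) + 1/2) - 1 := by
  have key : ∀ j ∈ Finset.range γ.n,
      vcross (γ.v j) (γ.v (j + 1)) ((a : ℝ) + 1/2, (b : ℝ) + 1/2) =
        vcross (γ.v j) (γ.v (j + 1)) ((a : ℝ) + 1/2, ((b - 1 : ℤ) : ℝ) + 1/2) +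
          ((if (γ.v j).2 = b ∧ a < (γ.v j).1 then 1 else 0) -
            (if (γ.v (j + 1)).2 = b ∧ a < (γ.v (j + 1)).1 then 1 else 0)) +
          (if j = i then -1 else 0) := by
    intro j hj
    rw [Finset.mem_range] at hj
    rw [vcross_half, vcross_half]
    have hs := LC_step' γ j
    by_cases hji : j = i
    · subst hji
      have e1 : (γ.v j).1 = a + 1 := by rw [h1]
      have e2 : (γ.v j).2 = b := by rw [h1]
      have e3 : (γ.v (j + 1)).1 = a := by rw [h2]
      have e4 : (γ.v (j + 1)).2 = b := by rw [h2]
      rw [if_pos rfl]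
      split_ifs <;> omega
    · have f1 := LC_inj' γ hi hj hji (a + 1) b h1
      have f2 := LC_no_reverse' γ hi hj (a + 1) b a b h1 h2
      rw [if_neg hji]
      rcases hs with hs | hs | hs | hs <;> split_ifs <;> omega
  unfold wind
  rw [Finset.sum_congr rfl key, Finset.sum_add_distrib, Finset.sum_add_distrib,
    Finset.sum_range_sub' (fun j => if (γ.v j).2 = b ∧ a < (γ.v j).1 then (1 : ℤ) else 0),
    Finset.sum_ite_eq' (Finset.range γ.n) i (fun _ => (-1 : ℤ)),
    if_pos (Finset.mem_range.mpr hi)]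
  have hper : γ.v γ.n = γ.v 0 := by have := γ.periodic 0; simpa using this
  rw [hper, sub_self, add_zero]
  ring


lemma corner_not_mem (γ : LatticeCycle) (z : ℤ × ℤ) (k l : ℤ)
    (hk : k = -1 ∨ k = 1) (hl : l = -1 ∨ l = 1) : corner z k l ∉ γ.image := by
  intro hmem
  rw [LatticeCycle.image] at hmem
  simp only [Set.mem_iUnion] at hmem
  obtain ⟨j, hj, hseg⟩ := hmem
  obtain ⟨s, t, hs, ht, hst, heq⟩ := hseg
  have h1 := congrArg Prod.fst heq
  have h2 := congrArg Prod.snd heq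
  simp only [Prod.fst_add, Prod.snd_add, Prod.smul_fst, Prod.smul_snd, smul_eq_mul,
    toR, corner] at h1 h2
  rcases LC_step' γ j with h | h | h | h
  · -- horizontal: second coordinates equal
    have hw : ((γ.v (j + 1)).2 : ℝ) = ((γ.v j).2 : ℝ) := by exact_mod_cast h.2
    rw [hw] at h2
    have hc : ((γ.v j).2 : ℝ) = (z.2 : ℝ) + (l : ℝ) / 2 := by
      linear_combination h2 - ((γ.v j).2 : ℝ) * hst
    have hc2 : (2 * (γ.v j).2 : ℤ) = 2 * z.2 + l := by
      have : ((2 * (γ.v j).2 : ℤ) : ℝ) = ((2 * z.2 + l : ℤ) : ℝ) := by push_cast; linarith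
      exact_mod_cast this
    omega
  · have hw : ((γ.v (j + 1)).2 : ℝ) = ((γ.v j).2 : ℝ) := by exact_mod_cast h.2
    rw [hw] at h2
    have hc : ((γ.v j).2 : ℝ) = (z.2 : ℝ) + (l : ℝ) / 2 := by
      linear_combination h2 - ((γ.v j).2 : ℝ) * hst
    have hc2 : (2 * (γ.v j).2 : ℤ) = 2 * z.2 + l := by
      have : ((2 * (γ.v j).2 : ℤ) : ℝ) = ((2 * z.2 + l : ℤ) : ℝ) := by push_cast; linarith
      exact_mod_cast this
    omega
  · -- vertical: first coordinates equal
    have hw : ((γ.v (j + 1)).1 : ℝ) = ((γ.v j).1 : ℝ) := by exact_mod_cast h.1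
    rw [hw] at h1
    have hc : ((γ.v j).1 : ℝ) = (z.1 : ℝ) + (k : ℝ) / 2 := by
      linear_combination h1 - ((γ.v j).1 : ℝ) * hst
    have hc2 : (2 * (γ.v j).1 : ℤ) = 2 * z.1 + k := by
      have : ((2 * (γ.v j).1 : ℤ) : ℝ) = ((2 * z.1 + k : ℤ) : ℝ) := by push_cast; linarith
      exact_mod_cast this
    omega
  · have hw : ((γ.v (j + 1)).1 : ℝ) = ((γ.v j).1 : ℝ) := by exact_mod_cast h.1
    rw [hw] at h1
    have hc : ((γ.v j).1 : ℝ) = (z.1 : ℝ) + (k : ℝ) / 2 := by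
      linear_combination h1 - ((γ.v j).1 : ℝ) * hst
    have hc2 : (2 * (γ.v j).1 : ℤ) = 2 * z.1 + k := by
      have : ((2 * (γ.v j).1 : ℤ) : ℝ) = ((2 * z.1 + k : ℤ) : ℝ) := by push_cast; linarith
      exact_mod_cast this
    omega

lemma exists_pair (γ : LatticeCycle) (v : ℤ × ℤ) (hv : γ.isVertex v) :
    ∃ c : ℤ, c ∈ windSet γ v ∧ c + 1 ∈ windSet γ v := by
  obtain ⟨i, hi, hvi⟩ := hv
  have eA : (((v.1 - 1 : ℤ) : ℝ) + 1/2, (v.2 : ℝ) + 1/2) = corner v (-1) 1 := by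
    apply Prod.ext <;> simp [corner] <;> push_cast <;> ring
  have eB : ((v.1 : ℝ) + 1/2, (v.2 : ℝ) + 1/2) = corner v 1 1 := by
    apply Prod.ext <;> simp [corner] <;> push_cast <;> ring
  have eC : (((v.1 - 1 : ℤ) : ℝ) + 1/2, ((v.2 - 1 : ℤ) : ℝ) + 1/2) = corner v (-1) (-1) := by
    apply Prod.ext <;> simp [corner] <;> push_cast <;> ring
  have eD : ((v.1 : ℝ) + 1/2, ((v.2 - 1 : ℤ) : ℝ) + 1/2) = corner v 1 (-1) := by
    apply Prod.ext <;> simp [corner] <;> push_cast <;> ring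
  have hv1 : γ.v i = (v.1, v.2) := by rw [hvi]
  rcases LC_step' γ i with h | h | h | h
  · -- right edge
    have h2 : γ.v (i + 1) = (v.1 + 1, v.2) :=
      Prod.ext (by rw [h.1, hvi]) (by rw [h.2, hvi])
    have key := wind_horiz_right γ hi v.1 v.2 hv1 h2
    rw [eB, eD] at key
    refine ⟨wind γ (corner v 1 (-1)), by simp [windSet], ?_⟩
    rw [← key]
    simp [windSet]
  · -- left edge
    have h2 : γ.v (i + 1) = (v.1 - 1, v.2) :=
      Prod.ext (by rw [h.1, hvi]) (by rw [h.2, hvi])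
    have key := wind_horiz_left γ hi (v.1 - 1) v.2
      (by rw [hvi]; exact Prod.ext (by norm_num) rfl)
      (by rw [h2])
    rw [eA, eC] at key
    refine ⟨wind γ (corner v (-1) 1), by simp [windSet], ?_⟩
    have : wind γ (corner v (-1) 1) + 1 = wind γ (corner v (-1) (-1)) := by omega
    rw [this]
    simp [windSet]
  · -- up edge
    have h2 : γ.v (i + 1) = (v.1, v.2 + 1) :=
      Prod.ext (by rw [h.1, hvi]) (by rw [h.2, hvi])
    have key := wind_vert_up γ hi v.1 v.2 hv1 h2
    rw [eA, eB] at key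
    refine ⟨wind γ (corner v 1 1), by simp [windSet], ?_⟩
    rw [← key]
    simp [windSet]
  · -- down edge
    have h2 : γ.v (i + 1) = (v.1, v.2 - 1) :=
      Prod.ext (by rw [h.1, hvi]) (by rw [h.2, hvi])
    have key := wind_vert_down γ hi v.1 (v.2 - 1)
      (by rw [hvi]; exact Prod.ext rfl (by norm_num))
      (by rw [h2])
    rw [eC, eD] at key
    refine ⟨wind γ (corner v (-1) (-1)), by simp [windSet], ?_⟩
    have : wind γ (corner v (-1) (-1)) + 1 = wind γ (corner v 1 (-1)) := by omega
    rw [this]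
    simp [windSet]


lemma windSet_range_ccw (γ : LatticeCycle) (v : ℤ × ℤ) (h : γ.ccw) :
    ∀ x ∈ windSet γ v, x = 0 ∨ x = 1 := by
  intro x hx
  simp only [windSet, Finset.mem_insert, Finset.mem_singleton] at hx
  rcases hx with h' | h' | h' | h' <;> subst h' <;>
    exact h _ (corner_not_mem γ v _ _ (by norm_num) (by norm_num))

lemma windSet_range_cw (γ : LatticeCycle) (v : ℤ × ℤ) (h : γ.cw) :
    ∀ x ∈ windSet γ v, x = -1 ∨ x = 0 := by
  intro x hx
  simp only [windSet, Finset.mem_insert, Finset.mem_singleton] at hx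
  rcases hx with h' | h' | h' | h' <;> subst h' <;>
    exact h _ (corner_not_mem γ v _ _ (by norm_num) (by norm_num))

theorem topw_at_vertex_aux (γ : LatticeCycle) (v : ℤ × ℤ) (hv : γ.isVertex v) :
    (γ.ccw → topw γ v = 1/2) ∧ (γ.cw → topw γ v = -(1/2)) := by
  obtain ⟨c, hc, hc1⟩ := exists_pair γ v hv
  constructor
  · intro hccw
    have hrange := windSet_range_ccw γ v hccw
    have hc0 : c = 0 := by
      rcases hrange c hc with h | h
      · exact h
      · exfalso; rcases hrange _ hc1 with h' | h' <;> omega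
    subst hc0
    have hset : windSet γ v = {0, 1} := by
      apply Finset.Subset.antisymm
      · intro x hx; rcases hrange x hx with rfl | rfl <;> simp
      · intro x hx
        simp only [Finset.mem_insert, Finset.mem_singleton] at hx
        rcases hx with rfl | rfl
        · exact hc
        · simpa using hc1
    unfold topw
    rw [hset, Finset.sum_pair (by norm_num : (0 : ℤ) ≠ 1),
      Finset.card_pair (by norm_num : (0 : ℤ) ≠ 1)]
    norm_num
  · intro hcw
    have hrange := windSet_range_cw γ v hcw
    have hc0 : c = -1 := by
      rcases hrange c hc with h | h
      · exact h
      · exfalso; rcases hrange _ hc1 with h' | h' <;> omega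
    subst hc0
    have hset : windSet γ v = {-1, 0} := by
      apply Finset.Subset.antisymm
      · intro x hx; rcases hrange x hx with rfl | rfl <;> simp
      · intro x hx
        simp only [Finset.mem_insert, Finset.mem_singleton] at hx
        rcases hx with rfl | rfl
        · exact hc
        · simpa using hc1
    unfold topw
    rw [hset, Finset.sum_pair (by norm_num : (-1 : ℤ) ≠ 0),
      Finset.card_pair (by norm_num : (-1 : ℤ) ≠ 0)]
    norm_num


/-- At a vertex `v` of `γ`, `topw(γ,v) = 1/2` if `γ` is
counterclockwise oriented, and `topw(γ,v) = -1/2` if `γ` is clockwise oriented. -/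
theorem topw_at_vertex (γ : LatticeCycle) (v : ℤ × ℤ) (hv : γ.isVertex v) :
    (γ.ccw → topw γ v = 1/2) ∧ (γ.cw → topw γ v = -(1/2)) := by
  exact topw_at_vertex_aux γ v hv
end
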